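/- arXiv:1305.4877 — 3 statements merged into one kernel-verified Lean document; each statement's English description precedes it below -/
import Mathlib

section
/- For every n ≥ 1 and every k with 1 ≤ k ≤ n, the number of link patterns of n strands whose exposure number equals k is binom(2n−k, n)·k/(2n−k); equivalently, (2n−k) times this number equals k·binom(2n−k, n). -/
/-- A link pattern of `n` strands: a fixed-point-free involution of `{0, …, 2n-1}`
that is noncrossing. -/
def IsLinkPattern (n : ℕ) (μ : Fin (2*n) → Fin (2*n)) : Prop :=
  (∀ i, μ (μ i) = i) ∧ (∀ i, μ i ≠ i) ∧
  (∀ a b c d : Fin (2*n), a < b → b < c → c < d → μ a = c → μ b = d → False)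

/-- The exposure number of `μ`: the number of outermost links `(a, b)` (pairs with
`a < b`, `μ a = b`, such that there is no link `(c, d)` with `c < a` and `b < d`). -/
noncomputable def exposure (n : ℕ) (μ : Fin (2*n) → Fin (2*n)) : ℕ :=
  Nat.card {p : Fin (2*n) × Fin (2*n) //
    p.1 < p.2 ∧ μ p.1 = p.2 ∧ ∀ c d : Fin (2*n), c < p.1 → p.2 < d → μ c ≠ d}

namespace LP

variable {n : ℕ} {μ : Fin (2*n) → Fin (2*n)}

theorem nc (h : IsLinkPattern n μ) {a b c d : Fin (2*n)} (h1 : a.val < b.val)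
    (h2 : b.val < c.val) (h3 : c.val < d.val) (ha : μ a = c) (hb : μ b = d) : False :=
  h.2.2 a b c d (Fin.lt_def.mpr h1) (Fin.lt_def.mpr h2) (Fin.lt_def.mpr h3) ha hb

theorem inj (h : IsLinkPattern n μ) {i j : Fin (2*n)} (hij : μ i = μ j) : i = j := by
  have := congrArg μ hij; rwa [h.1, h.1] at this

theorem fpf (h : IsLinkPattern n μ) (i : Fin (2*n)) : (μ i).val ≠ i.val :=
  fun hv => h.2.1 i (Fin.ext hv)

theorem mem_inside (h : IsLinkPattern n μ) {x c : Fin (2*n)}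
    (hx : x.val < (μ x).val) (h1 : x.val < c.val) (h2 : c.val < (μ x).val) :
    x.val < (μ c).val ∧ (μ c).val < (μ x).val := by
  have e1 : μ (μ c) = c := h.1 c
  have ne1 : (μ c).val ≠ x.val := by
    intro hh
    have hcx : μ c = x := Fin.ext hh
    have h3 : c = μ x := by rw [← hcx, e1]
    rw [h3] at h2; omega
  have ne2 : (μ c).val ≠ (μ x).val := by
    intro hh
    have := inj h (Fin.ext hh : μ c = μ x); omega
  rcases Nat.lt_trichotomy (μ c).val x.val with hlt | heq | hgt
  · exact (nc h hlt h1 h2 e1 rfl).elim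
  · exact absurd heq ne1
  · rcases Nat.lt_trichotomy (μ c).val (μ x).val with h' | h' | h'
    · exact ⟨hgt, h'⟩
    · exact absurd h' ne2
    · exact (nc h h1 h2 h' rfl rfl).elim

open Classical in
noncomputable def Sfin (n : ℕ) (μ : Fin (2*n) → Fin (2*n)) : Finset (Fin (2*n)) :=
  Finset.univ.filter
    (fun x => x.val < (μ x).val ∧ ∀ c : Fin (2*n), c.val < x.val → (μ c).val < x.val)

theorem mem_Sfin {x : Fin (2*n)} :
    x ∈ Sfin n μ ↔ x.val < (μ x).val ∧ ∀ c : Fin (2*n), c.val < x.val → (μ c).val < x.val := by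
  simp [Sfin]

theorem exposure_eq (h : IsLinkPattern n μ) : exposure n μ = (Sfin n μ).card := by
  rw [exposure, ← Nat.card_eq_finsetCard]
  apply Nat.card_congr
  refine
    { toFun := fun p => ⟨p.1.1, ?_⟩
      invFun := fun x => ⟨(x.1, μ x.1), ?_⟩
      left_inv := ?_
      right_inv := ?_ }
  · obtain ⟨⟨a, b⟩, hab, hb, hout⟩ := p
    simp only at hab hb hout ⊢
    rw [mem_Sfin]
    constructor
    · rw [hb]; exact hab
    · intro c hc
      by_contra hge
      push_neg at hge
      -- a.val ≤ (μ c).val; derive contradiction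
      have hne1 : (μ c).val ≠ a.val := by
        intro hh
        have : c = μ a := by rw [← Fin.ext hh, h.1]
        rw [this, hb] at hc; omega
      have hne2 : (μ c).val ≠ b.val := by
        intro hh
        have hcb : μ c = b := Fin.ext hh
        have : c = μ b := by rw [← hcb, h.1]
        have hba : μ b = a := by rw [← hb, h.1]
        rw [this, hba] at hc; omega
      rcases Nat.lt_trichotomy (μ c).val b.val with h' | h' | h'
      · have hab' : a.val < b.val := hab
        exact nc h hc (by omega) (by rw [← hb]; omega) rfl hb
      · exact hne2 h'
      · exact hout c (μ c) hc (Fin.lt_def.mpr h') rfl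
  · obtain ⟨x, hx⟩ := x
    rw [mem_Sfin] at hx
    dsimp only
    refine ⟨Fin.lt_def.mpr hx.1, rfl, ?_⟩
    intro c d hc hd heq
    rw [Fin.lt_def] at hc hd
    have h1 := hx.2 c hc
    have h2 : (μ c).val = d.val := congrArg Fin.val heq
    omega
  · intro p
    apply Subtype.ext
    exact Prod.ext rfl p.2.2.1
  · intro x; rfl

theorem exposure_pos (h : IsLinkPattern n μ) (hn : 0 < n) : 1 ≤ exposure n μ := by
  rw [exposure_eq h]
  refine Finset.card_pos.mpr ⟨⟨0, by omega⟩, ?_⟩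
  rw [mem_Sfin]
  exact ⟨Nat.pos_of_ne_zero (fpf h _), fun c hc => absurd (show c.val < 0 from hc) (by omega)⟩

theorem exposure_le (h : IsLinkPattern n μ) : exposure n μ ≤ n := by
  classical
  rw [exposure_eq h]
  have hsub : Sfin n μ ⊆ Finset.univ.filter (fun x => x.val < (μ x).val) := by
    intro x hx
    rw [mem_Sfin] at hx
    simp only [Finset.mem_filter, Finset.mem_univ, true_and]
    exact hx.1
  have hcard : (Finset.univ.filter (fun x : Fin (2*n) => x.val < (μ x).val)).card = n := by
    have hbij : (Finset.univ.filter (fun x : Fin (2*n) => x.val < (μ x).val)).card =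
        (Finset.univ.filter (fun x : Fin (2*n) => ¬ x.val < (μ x).val)).card := by
      apply Finset.card_bij' (fun a _ => μ a) (fun a _ => μ a)
      · intro a ha
        simp only [Finset.mem_filter, Finset.mem_univ, true_and] at ha ⊢
        rw [h.1]; omega
      · intro a ha
        simp only [Finset.mem_filter, Finset.mem_univ, true_and] at ha ⊢
        rw [h.1]
        have := fpf h a; omega
      · intro a _; rw [h.1]
      · intro a _; rw [h.1]
    have := Finset.card_filter_add_card_filter_not
      (s := (Finset.univ : Finset (Fin (2*n))))
      (p := fun x => x.val < (μ x).val)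
    simp only [Finset.card_univ, Fintype.card_fin] at this
    omega
  calc (Sfin n μ).card ≤ _ := Finset.card_le_card hsub
    _ = n := hcard

noncomputable def A (n k : ℕ) : ℕ :=
  Nat.card {μ : Fin (2*n) → Fin (2*n) // IsLinkPattern n μ ∧ exposure n μ = k}

theorem A_eq_zero_of_gt {n k : ℕ} (h : n < k) : A n k = 0 := by
  have : IsEmpty {μ : Fin (2*n) → Fin (2*n) // IsLinkPattern n μ ∧ exposure n μ = k} :=
    ⟨fun x => by have := exposure_le x.2.1; have := x.2.2; omega⟩
  exact Nat.card_of_isEmpty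

theorem A_zero {n : ℕ} (hn : 1 ≤ n) : A n 0 = 0 := by
  have : IsEmpty {μ : Fin (2*n) → Fin (2*n) // IsLinkPattern n μ ∧ exposure n μ = 0} :=
    ⟨fun x => by have := exposure_pos x.2.1 (by omega); have := x.2.2; omega⟩
  exact Nat.card_of_isEmpty

theorem A_zero_zero : A 0 0 = 1 := by
  rw [A, Nat.card_eq_one_iff_unique]
  constructor
  · exact ⟨fun a b => Subtype.ext (funext fun x => x.elim0)⟩
  · refine ⟨⟨fun x => x, ⟨fun i => rfl, fun i => i.elim0, fun a _ _ _ _ _ _ _ _ => a.elim0⟩, ?_⟩⟩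
    rw [exposure]
    exact @Nat.card_of_isEmpty _ ⟨fun p => p.1.1.elim0⟩

section Case1

variable {n : ℕ}

def ext (n : ℕ) (μ' : Fin (2*n) → Fin (2*n)) : Fin (2*(n+1)) → Fin (2*(n+1)) :=
  fun x => if h : x.val < 2*n then
      ⟨(μ' ⟨x.val, h⟩).val, by have := (μ' ⟨x.val, h⟩).isLt; omega⟩
    else ⟨4*n+1 - x.val, by have := x.isLt; omega⟩

def res (n : ℕ) (μ : Fin (2*(n+1)) → Fin (2*(n+1))) : Fin (2*n) → Fin (2*n) :=
  fun i => ⟨min (μ ⟨i.val, by have := i.isLt; omega⟩).val (2*n-1),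
    by have := i.isLt; omega⟩

variable {μ : Fin (2*(n+1)) → Fin (2*(n+1))} {μ' : Fin (2*n) → Fin (2*n)}

theorem ext_val_low (x : Fin (2*(n+1))) (i : Fin (2*n)) (hxi : x.val = i.val) :
    (ext n μ' x).val = (μ' i).val := by
  have hx : x.val < 2*n := by rw [hxi]; exact i.isLt
  simp only [ext, dif_pos hx, Fin.val_mk]
  rw [show (⟨x.val, hx⟩ : Fin (2*n)) = i from Fin.ext (by rw [Fin.val_mk, hxi])]

theorem ext_val_hi (x : Fin (2*(n+1))) (hx : 2*n ≤ x.val) :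
    (ext n μ' x).val = 4*n+1 - x.val := by
  simp only [ext, dif_neg (by omega : ¬ x.val < 2*n), Fin.val_mk]

theorem res_val_min (i : Fin (2*n)) (j : Fin (2*(n+1))) (hij : j.val = i.val) :
    (res n μ i).val = min (μ j).val (2*n-1) := by
  simp only [res, Fin.val_mk]
  rw [show (⟨i.val, by have := i.isLt; omega⟩ : Fin (2*(n+1))) = j from
    Fin.ext (by rw [Fin.val_mk, hij])]

theorem sec_last (h : IsLinkPattern (n+1) μ)
    (hl : ∀ j : Fin (2*(n+1)), j.val = 2*n+1 → (μ j).val = 2*n) :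
    ∀ j : Fin (2*(n+1)), j.val = 2*n → (μ j).val = 2*n+1 := by
  intro j hj
  obtain ⟨L, hL⟩ : ∃ L : Fin (2*(n+1)), L.val = 2*n+1 := ⟨⟨2*n+1, by omega⟩, rfl⟩
  have h1 : μ L = j := Fin.ext (by rw [hl L hL, hj])
  have h2 := congrArg Fin.val (h.1 L)
  rw [h1] at h2
  omega

theorem res_closure (h : IsLinkPattern (n+1) μ)
    (hl : ∀ j : Fin (2*(n+1)), j.val = 2*n+1 → (μ j).val = 2*n)
    (x : Fin (2*(n+1))) (hx : x.val < 2*n) : (μ x).val < 2*n := by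
  obtain ⟨L, hL⟩ : ∃ L : Fin (2*(n+1)), L.val = 2*n+1 := ⟨⟨2*n+1, by omega⟩, rfl⟩
  obtain ⟨S, hS⟩ : ∃ S : Fin (2*(n+1)), S.val = 2*n := ⟨⟨2*n, by omega⟩, rfl⟩
  have e1 := hl L hL
  have e2 := sec_last h hl S hS
  have ne1 : (μ x).val ≠ 2*n := by
    intro hh
    have hxL : μ x = μ L := Fin.ext (by omega)
    have := congrArg Fin.val (inj h hxL); omega
  have ne2 : (μ x).val ≠ 2*n+1 := by
    intro hh
    have hxS : μ x = μ S := Fin.ext (by omega)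
    have := congrArg Fin.val (inj h hxS); omega
  have := (μ x).isLt; omega

theorem res_val (h : IsLinkPattern (n+1) μ)
    (hl : ∀ j : Fin (2*(n+1)), j.val = 2*n+1 → (μ j).val = 2*n)
    (i : Fin (2*n)) (j : Fin (2*(n+1))) (hij : j.val = i.val) :
    (res n μ i).val = (μ j).val := by
  have hclo := res_closure h hl j (by rw [hij]; exact i.isLt)
  have h2 := res_val_min (μ := μ) i j hij
  rw [h2]
  have := i.isLt
  omega

theorem res_pattern (h : IsLinkPattern (n+1) μ)
    (hl : ∀ j : Fin (2*(n+1)), j.val = 2*n+1 → (μ j).val = 2*n) :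
    IsLinkPattern n (res n μ) := by
  refine ⟨?_, ?_, ?_⟩
  · intro i
    apply Fin.ext
    obtain ⟨j, hj⟩ : ∃ j : Fin (2*(n+1)), j.val = i.val := ⟨⟨i.val, by have := i.isLt; omega⟩, rfl⟩
    have e1 := res_val h hl i j hj
    obtain ⟨j2, hj2⟩ : ∃ j2 : Fin (2*(n+1)), j2.val = (res n μ i).val :=
      ⟨⟨(res n μ i).val, by have := (res n μ i).isLt; omega⟩, rfl⟩
    have e2 := res_val h hl (res n μ i) j2 hj2
    have e3 : j2 = μ j := Fin.ext (by omega)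
    rw [e3] at e2
    have e4 := congrArg Fin.val (h.1 j)
    omega
  · intro i hi
    have hv := congrArg Fin.val hi
    obtain ⟨j, hj⟩ : ∃ j : Fin (2*(n+1)), j.val = i.val := ⟨⟨i.val, by have := i.isLt; omega⟩, rfl⟩
    have e1 := res_val h hl i j hj
    have := fpf h j
    omega
  · intro a b c d hab hbc hcd hac hbd
    rw [Fin.lt_def] at hab hbc hcd
    have hac' := congrArg Fin.val hac
    have hbd' := congrArg Fin.val hbd
    obtain ⟨ja, hja⟩ : ∃ j : Fin (2*(n+1)), j.val = a.val := ⟨⟨a.val, by have := a.isLt; omega⟩, rfl⟩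
    obtain ⟨jb, hjb⟩ : ∃ j : Fin (2*(n+1)), j.val = b.val := ⟨⟨b.val, by have := b.isLt; omega⟩, rfl⟩
    obtain ⟨jc, hjc⟩ : ∃ j : Fin (2*(n+1)), j.val = c.val := ⟨⟨c.val, by have := c.isLt; omega⟩, rfl⟩
    obtain ⟨jd, hjd⟩ : ∃ j : Fin (2*(n+1)), j.val = d.val := ⟨⟨d.val, by have := d.isLt; omega⟩, rfl⟩
    have e1 := res_val h hl a ja hja
    have e2 := res_val h hl b jb hjb
    exact nc h (a := ja) (b := jb) (c := jc) (d := jd) (by omega) (by omega) (by omega)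
      (Fin.ext (by omega)) (Fin.ext (by omega))

theorem ext_pattern (h' : IsLinkPattern n μ') : IsLinkPattern (n+1) (ext n μ') := by
  refine ⟨?_, ?_, ?_⟩
  · intro x
    apply Fin.ext
    by_cases hx : x.val < 2*n
    · obtain ⟨i, hi⟩ : ∃ i : Fin (2*n), i.val = x.val := ⟨⟨x.val, hx⟩, rfl⟩
      have e1 := ext_val_low (μ' := μ') x i hi.symm
      have e2 := ext_val_low (μ' := μ') (ext n μ' x) (μ' i) e1
      have e3 := congrArg Fin.val (h'.1 i)
      omega
    · have e1 := ext_val_hi (μ' := μ') x (by omega)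
      have hx2 := x.isLt
      have e2 := ext_val_hi (μ' := μ') (ext n μ' x) (by omega)
      omega
  · intro x hx
    have hv := congrArg Fin.val hx
    by_cases h : x.val < 2*n
    · obtain ⟨i, hi⟩ : ∃ i : Fin (2*n), i.val = x.val := ⟨⟨x.val, h⟩, rfl⟩
      have e1 := ext_val_low (μ' := μ') x i hi.symm
      have := fpf h' i
      omega
    · have e1 := ext_val_hi (μ' := μ') x (by omega)
      have := x.isLt; omega
  · intro a b c d hab hbc hcd hac hbd
    rw [Fin.lt_def] at hab hbc hcd
    have hac' := congrArg Fin.val hac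
    have hbd' := congrArg Fin.val hbd
    have hd2 := d.isLt
    by_cases hd : d.val < 2*n
    · obtain ⟨ia, hia⟩ : ∃ i : Fin (2*n), i.val = a.val := ⟨⟨a.val, by omega⟩, rfl⟩
      obtain ⟨ib, hib⟩ : ∃ i : Fin (2*n), i.val = b.val := ⟨⟨b.val, by omega⟩, rfl⟩
      obtain ⟨ic, hic⟩ : ∃ i : Fin (2*n), i.val = c.val := ⟨⟨c.val, by omega⟩, rfl⟩
      obtain ⟨id', hid⟩ : ∃ i : Fin (2*n), i.val = d.val := ⟨⟨d.val, by omega⟩, rfl⟩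
      have e1 := ext_val_low (μ' := μ') a ia hia.symm
      have e2 := ext_val_low (μ' := μ') b ib hib.symm
      exact nc h' (a := ia) (b := ib) (c := ic) (d := id') (by omega) (by omega) (by omega)
        (Fin.ext (by omega)) (Fin.ext (by omega))
    · by_cases hb : b.val < 2*n
      · obtain ⟨ib, hib⟩ : ∃ i : Fin (2*n), i.val = b.val := ⟨⟨b.val, by omega⟩, rfl⟩
        have e2 := ext_val_low (μ' := μ') b ib hib.symm
        have := (μ' ib).isLt; omega
      · have := b.isLt; omega

theorem ext_res (h : IsLinkPattern (n+1) μ)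
    (hl : ∀ j : Fin (2*(n+1)), j.val = 2*n+1 → (μ j).val = 2*n) :
    ext n (res n μ) = μ := by
  funext x
  apply Fin.ext
  by_cases hx : x.val < 2*n
  · obtain ⟨i, hi⟩ : ∃ i : Fin (2*n), i.val = x.val := ⟨⟨x.val, hx⟩, rfl⟩
    have e1 := ext_val_low (μ' := res n μ) x i hi.symm
    have e2 := res_val h hl i x hi.symm
    omega
  · have e1 := ext_val_hi (μ' := res n μ) x (by omega)
    have hx2 := x.isLt
    rcases (by omega : x.val = 2*n ∨ x.val = 2*n+1) with h1 | h1
    · have := sec_last h hl x h1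
      omega
    · have := hl x h1
      omega

theorem res_ext : res n (ext n μ') = μ' := by
  funext i
  apply Fin.ext
  obtain ⟨j, hj⟩ : ∃ j : Fin (2*(n+1)), j.val = i.val := ⟨⟨i.val, by have := i.isLt; omega⟩, rfl⟩
  have e0 := res_val_min (μ := ext n μ') i j hj
  have e1 := ext_val_low (μ' := μ') j i hj
  have := (μ' i).isLt
  have hn1 : 1 ≤ n := by have := i.isLt; omega
  omega

theorem ext_exposure (h' : IsLinkPattern n μ') :
    exposure (n+1) (ext n μ') = exposure n μ' + 1 := by
  rw [exposure_eq (ext_pattern h'), exposure_eq h']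
  obtain ⟨S, hS⟩ : ∃ S : Fin (2*(n+1)), S.val = 2*n := ⟨⟨2*n, by omega⟩, rfl⟩
  have hmem : S ∈ Sfin (n+1) (ext n μ') := by
    rw [mem_Sfin]
    have e1 := ext_val_hi (μ' := μ') S (by omega)
    refine ⟨by omega, ?_⟩
    intro c hc
    obtain ⟨i, hi⟩ : ∃ i : Fin (2*n), i.val = c.val := ⟨⟨c.val, by omega⟩, rfl⟩
    have e2 := ext_val_low (μ' := μ') c i hi.symm
    have := (μ' i).isLt
    omega
  rw [← Finset.card_erase_add_one hmem]
  congr 1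
  have hkey : ∀ x : Fin (2*(n+1)), x ∈ (Sfin (n+1) (ext n μ')).erase S → x.val < 2*n := by
    intro x hx
    rw [Finset.mem_erase, mem_Sfin] at hx
    have h1 : x.val ≠ 2*n := fun hh => hx.1 (Fin.ext (by omega))
    have h2 : x.val ≠ 2*n+1 := by
      intro hh
      have h3 := ext_val_hi (μ' := μ') x (by omega)
      have h4 := hx.2.1
      omega
    have := x.isLt; omega
  refine Finset.card_bij'
    (fun (x : Fin (2*(n+1))) (hx : x ∈ _) => (⟨x.val, hkey x hx⟩ : Fin (2*n)))
    (fun (y : Fin (2*n)) (_ : y ∈ _) => (⟨y.val, by have := y.isLt; omega⟩ : Fin (2*(n+1))))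
    ?_ ?_ ?_ ?_
  · intro x hx
    have hxlt := hkey x hx
    rw [Finset.mem_erase, mem_Sfin] at hx
    have hx' := hx
    rw [mem_Sfin]
    obtain ⟨i, hi⟩ : ∃ i : Fin (2*n), i.val = x.val := ⟨⟨x.val, hxlt⟩, rfl⟩
    rw [show (⟨x.val, hxlt⟩ : Fin (2*n)) = i from Fin.ext hi.symm]
    have e1 := ext_val_low (μ' := μ') x i hi.symm
    refine ⟨by have := hx.2.1; omega, ?_⟩
    intro c hc
    obtain ⟨c2, hc2⟩ : ∃ c2 : Fin (2*(n+1)), c2.val = c.val :=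
      ⟨⟨c.val, by have := c.isLt; omega⟩, rfl⟩
    have e2 := ext_val_low (μ' := μ') c2 c hc2
    have e3 := hx.2.2 c2 (by omega)
    omega
  · intro y hy
    rw [mem_Sfin] at hy
    obtain ⟨y2, hy2⟩ : ∃ y2 : Fin (2*(n+1)), y2.val = y.val :=
      ⟨⟨y.val, by have := y.isLt; omega⟩, rfl⟩
    rw [show (⟨y.val, by have := y.isLt; omega⟩ : Fin (2*(n+1))) = y2 from Fin.ext hy2.symm,
      Finset.mem_erase, mem_Sfin]
    have hylt : y.val < 2*n := y.isLt
    have e1 := ext_val_low (μ' := μ') y2 y hy2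
    refine ⟨fun hh => by have h5 := congrArg Fin.val hh; omega, by have := hy.1; omega, ?_⟩
    intro c hc
    have hclt : c.val < 2*n := by omega
    obtain ⟨i, hi⟩ : ∃ i : Fin (2*n), i.val = c.val := ⟨⟨c.val, hclt⟩, rfl⟩
    have e2 := ext_val_low (μ' := μ') c i hi.symm
    have e3 := hy.2 i (by omega)
    omega
  · intro x hx; exact Fin.ext rfl
  · intro y hy; exact Fin.ext rfl

end Case1

section Case2

variable {n : ℕ}

def fwd (n : ℕ) (μ : Fin (2*(n+1)) → Fin (2*(n+1))) : Fin (2*(n+1)) → Fin (2*(n+1)) :=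
  fun x =>
    if x.val = (μ ⟨2*n+1, by omega⟩).val then μ ⟨2*n, by omega⟩
    else if x.val = (μ ⟨2*n, by omega⟩).val then μ ⟨2*n+1, by omega⟩
    else if x.val = (μ ⟨2*n, by omega⟩).val + 1 then ⟨2*n+1, by omega⟩
    else if x.val = 2*n+1 then ⟨min ((μ ⟨2*n, by omega⟩).val + 1) (2*n+1), by omega⟩
    else if h : (μ ⟨2*n, by omega⟩).val + 1 < x.val ∧ x.val ≤ 2*n then
      ⟨min ((μ ⟨x.val - 1, by have := x.isLt; omega⟩).val + 1) (2*n+1), by omega⟩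
    else μ x

variable {μ : Fin (2*(n+1)) → Fin (2*(n+1))}

theorem fwd_eq (L S : Fin (2*(n+1)))
    (hL : L.val = 2*n+1) (hS : S.val = 2*n) (x : Fin (2*(n+1))) :
    fwd n μ x =
    (if x.val = (μ L).val then μ S
     else if x.val = (μ S).val then μ L
     else if x.val = (μ S).val + 1 then L
     else if x.val = 2*n+1 then ⟨min ((μ S).val + 1) (2*n+1), by omega⟩
     else if h : (μ S).val + 1 < x.val ∧ x.val ≤ 2*n then
       ⟨min ((μ ⟨x.val - 1, by have := x.isLt; omega⟩).val + 1) (2*n+1), by omega⟩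
     else μ x) := by
  simp only [fwd,
    show (⟨2*n+1, by omega⟩ : Fin (2*(n+1))) = L from Fin.ext (by rw [Fin.val_mk, hL]),
    show (⟨2*n, by omega⟩ : Fin (2*(n+1))) = S from Fin.ext (by rw [Fin.val_mk, hS])]

variable (h : IsLinkPattern (n+1) μ) (L S : Fin (2*(n+1)))
  (hL : L.val = 2*n+1) (hS : S.val = 2*n) (hne : (μ L).val ≠ 2*n)

include h hL hne in
theorem a_lt : (μ L).val < 2*n := by
  have h1 := fpf h L
  have := (μ L).isLt
  omega

include h hL hS hne in
theorem ae : (μ L).val < (μ S).val ∧ (μ S).val < 2*n := by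
  have hfS := fpf h S
  have halt := a_lt h L hL hne
  have h1 : (μ S).val ≠ 2*n+1 := by
    intro hh
    have h2 : μ S = L := Fin.ext (by omega)
    have h3 := congrArg Fin.val (h.1 S)
    rw [h2] at h3
    omega
  have hSlt : (μ S).val < 2*n := by have := (μ S).isLt; omega
  have hneq : (μ L).val ≠ (μ S).val := fun hh => by
    have := congrArg Fin.val (inj h (Fin.ext hh : μ L = μ S)); omega
  have hnlt : ¬ (μ S).val < (μ L).val := by
    intro hlt
    exact nc h (a := μ S) (b := μ L) (c := S) (d := L) hlt (by omega) (by omega) (h.1 S) (h.1 L)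
  omega

include h hL hne in
theorem cl_low (x : Fin (2*(n+1))) (hx : x.val < (μ L).val) : (μ x).val < (μ L).val := by
  have hinvL := congrArg Fin.val (h.1 L)
  have halt := a_lt h L hL hne
  have h1 : (μ x).val ≠ (μ L).val := fun hh => by
    have := congrArg Fin.val (inj h (Fin.ext hh : μ x = μ L)); omega
  have h2 : ¬ ((μ L).val < (μ x).val ∧ (μ x).val < 2*n+1) := by
    rintro ⟨u1, u2⟩
    obtain ⟨w1, w2⟩ := mem_inside h (x := μ L) (c := μ x) (by omega) (by omega) (by omega)
    have := congrArg Fin.val (h.1 x)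
    omega
  have h3 : (μ x).val ≠ 2*n+1 := fun hh => by
    have h4 : μ x = μ (μ L) := Fin.ext (by omega)
    have := congrArg Fin.val (inj h h4)
    omega
  have := (μ x).isLt; omega

include h hL hS hne in
theorem cl_Q (x : Fin (2*(n+1))) (h1 : (μ S).val < x.val) (h2 : x.val < 2*n) :
    (μ S).val < (μ x).val ∧ (μ x).val < 2*n := by
  have hinvS := congrArg Fin.val (h.1 S)
  have hae := ae h L S hL hS hne
  obtain ⟨w1, w2⟩ := mem_inside h (x := μ S) (c := x) (by omega) (by omega) (by omega)
  omega

include h hL hS hne in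
theorem cl_mid (x : Fin (2*(n+1))) (h1 : (μ L).val < x.val) (h2 : x.val < (μ S).val) :
    (μ L).val < (μ x).val ∧ (μ x).val < (μ S).val := by
  have hae := ae h L S hL hS hne
  have hinvL := congrArg Fin.val (h.1 L)
  have hinvS := congrArg Fin.val (h.1 S)
  obtain ⟨w1, w2⟩ := mem_inside h (x := μ L) (c := x) (by omega) (by omega) (by omega)
  have hne1 : (μ x).val ≠ (μ S).val := fun hh => by
    have := congrArg Fin.val (inj h (Fin.ext hh : μ x = μ S)); omega
  have hne2 : ¬ ((μ S).val < (μ x).val ∧ (μ x).val < 2*n) := by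
    rintro ⟨u1, u2⟩
    obtain ⟨v1, v2⟩ := cl_Q h L S hL hS hne (μ x) u1 u2
    have := congrArg Fin.val (h.1 x); omega
  have hne3 : (μ x).val ≠ 2*n := fun hh => by
    have h4 : μ x = μ (μ S) := Fin.ext (by omega)
    have := congrArg Fin.val (inj h h4)
    omega
  have hne4 : (μ x).val ≠ 2*n+1 := fun hh => by
    have h4 : μ x = μ (μ L) := Fin.ext (by omega)
    have := congrArg Fin.val (inj h h4)
    omega
  omega

include hL hS in
theorem fv_a (x : Fin (2*(n+1))) (hx : x.val = (μ L).val) : fwd n μ x = μ S := by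
  rw [fwd_eq L S hL hS, if_pos hx]

include hL hS in
theorem fv_e (x : Fin (2*(n+1))) (hne' : (μ L).val ≠ (μ S).val) (hx : x.val = (μ S).val) :
    fwd n μ x = μ L := by
  rw [fwd_eq L S hL hS, if_neg (by omega), if_pos hx]

include hL hS in
theorem fv_e1 (x : Fin (2*(n+1))) (ha : (μ L).val < (μ S).val) (hx : x.val = (μ S).val + 1) :
    fwd n μ x = L := by
  rw [fwd_eq L S hL hS, if_neg (by omega), if_neg (by omega), if_pos hx]

include hL hS in
theorem fv_last (x : Fin (2*(n+1))) (ha : (μ L).val < (μ S).val) (hS2 : (μ S).val < 2*n)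
    (hx : x.val = 2*n+1) : (fwd n μ x).val = (μ S).val + 1 := by
  rw [fwd_eq L S hL hS, if_neg (by omega), if_neg (by omega), if_neg (by omega), if_pos hx,
    Fin.val_mk]
  omega

include hL hS in
theorem fv_shift (x y : Fin (2*(n+1))) (ha : (μ L).val < (μ S).val) (hy : y.val = x.val - 1)
    (h1 : (μ S).val + 1 < x.val) (h2 : x.val ≤ 2*n) (hylt : (μ y).val ≤ 2*n) :
    (fwd n μ x).val = (μ y).val + 1 := by
  rw [fwd_eq L S hL hS, if_neg (by omega), if_neg (by omega), if_neg (by omega),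
    if_neg (by omega), dif_pos ⟨h1, h2⟩, Fin.val_mk,
    show (⟨x.val - 1, by have := x.isLt; omega⟩ : Fin (2*(n+1))) = y from
      Fin.ext (by rw [Fin.val_mk]; omega)]
  omega

include hL hS in
theorem fv_else (x : Fin (2*(n+1))) (ha : (μ L).val < (μ S).val) (hS2 : (μ S).val < 2*n)
    (hx : x.val < (μ L).val ∨ ((μ L).val < x.val ∧ x.val < (μ S).val)) : fwd n μ x = μ x := by
  rw [fwd_eq L S hL hS, if_neg (by omega), if_neg (by omega), if_neg (by omega),
    if_neg (by omega), dif_neg (by omega)]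

end Case2

section Case2b

variable {n : ℕ} {μ : Fin (2*(n+1)) → Fin (2*(n+1))}
variable (h : IsLinkPattern (n+1) μ) (L S : Fin (2*(n+1)))
  (hL : L.val = 2*n+1) (hS : S.val = 2*n) (hne : (μ L).val ≠ 2*n)

include h hL hS hne in
theorem fwd_link (u v : Fin (2*(n+1))) (huv : fwd n μ u = v) (hlt : u.val < v.val) :
    (u.val < (μ L).val ∧ v.val < (μ L).val ∧ μ u = v) ∨
    (u.val = (μ L).val ∧ v.val = (μ S).val) ∨
    ((μ L).val < u.val ∧ v.val < (μ S).val ∧ μ u = v) ∨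
    (u.val = (μ S).val + 1 ∧ v.val = 2*n+1) ∨
    ((μ S).val + 1 < u.val ∧ u.val ≤ 2*n ∧ v.val ≤ 2*n ∧
      ∀ w : Fin (2*(n+1)), w.val = u.val - 1 → (μ w).val = v.val - 1) := by
  have hae := ae h L S hL hS hne
  have hult := u.isLt
  have hvlt := v.isLt
  rcases (by omega : u.val < (μ L).val ∨ u.val = (μ L).val ∨
      ((μ L).val < u.val ∧ u.val < (μ S).val) ∨ u.val = (μ S).val ∨ u.val = (μ S).val + 1 ∨
      ((μ S).val + 1 < u.val ∧ u.val ≤ 2*n) ∨ u.val = 2*n+1) with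
    hc | hc | hc | hc | hc | hc | hc
  · have h1 := fv_else (μ := μ) L S hL hS u (by omega) (by omega) (Or.inl hc)
    rw [h1] at huv
    have h2 := cl_low h L hL hne u hc
    have h3 := congrArg Fin.val huv
    exact Or.inl ⟨hc, by omega, huv⟩
  · have h1 := fv_a (μ := μ) L S hL hS u hc
    rw [h1] at huv
    exact Or.inr (Or.inl ⟨hc, (congrArg Fin.val huv).symm⟩)
  · have h1 := fv_else (μ := μ) L S hL hS u (by omega) (by omega) (Or.inr hc)
    rw [h1] at huv
    have h2 := cl_mid h L S hL hS hne u hc.1 hc.2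
    have h3 := congrArg Fin.val huv
    exact Or.inr (Or.inr (Or.inl ⟨hc.1, by omega, huv⟩))
  · have h1 := fv_e (μ := μ) L S hL hS u (by omega) hc
    rw [h1] at huv
    have h3 := congrArg Fin.val huv
    omega
  · have h1 := fv_e1 (μ := μ) L S hL hS u (by omega) hc
    rw [h1] at huv
    have h3 := congrArg Fin.val huv
    exact Or.inr (Or.inr (Or.inr (Or.inl ⟨hc, by omega⟩)))
  · obtain ⟨y, hy⟩ : ∃ y : Fin (2*(n+1)), y.val = u.val - 1 := ⟨⟨u.val - 1, by omega⟩, rfl⟩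
    have hyQ := cl_Q h L S hL hS hne y (by omega) (by omega)
    have h1 := fv_shift (μ := μ) L S hL hS u y (by omega) hy hc.1 hc.2 (by omega)
    have h3 := congrArg Fin.val huv
    refine Or.inr (Or.inr (Or.inr (Or.inr ⟨hc.1, hc.2, by omega, ?_⟩)))
    intro w hw
    rw [show w = y from Fin.ext (by omega)]
    omega
  · have h1 := fv_last (μ := μ) L S hL hS u (by omega) (by omega) hc
    have h3 := congrArg Fin.val huv
    omega

include h hL hS hne in
theorem fwd_pattern : IsLinkPattern (n+1) (fwd n μ) := by
  have hae := ae h L S hL hS hne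
  refine ⟨?_, ?_, ?_⟩
  · intro x
    have hxlt := x.isLt
    rcases (by omega : x.val < (μ L).val ∨ x.val = (μ L).val ∨
        ((μ L).val < x.val ∧ x.val < (μ S).val) ∨ x.val = (μ S).val ∨ x.val = (μ S).val + 1 ∨
        ((μ S).val + 1 < x.val ∧ x.val ≤ 2*n) ∨ x.val = 2*n+1) with
      hc | hc | hc | hc | hc | hc | hc
    · rw [fv_else (μ := μ) L S hL hS x (by omega) (by omega) (Or.inl hc)]
      rw [fv_else (μ := μ) L S hL hS (μ x) (by omega) (by omega) (Or.inl (cl_low h L hL hne x hc))]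
      exact h.1 x
    · rw [fv_a (μ := μ) L S hL hS x hc, fv_e (μ := μ) L S hL hS (μ S) (by omega) rfl]
      exact Fin.ext (by omega)
    · rw [fv_else (μ := μ) L S hL hS x (by omega) (by omega) (Or.inr hc)]
      rw [fv_else (μ := μ) L S hL hS (μ x) (by omega) (by omega)
        (Or.inr (cl_mid h L S hL hS hne x hc.1 hc.2))]
      exact h.1 x
    · rw [fv_e (μ := μ) L S hL hS x (by omega) hc, fv_a (μ := μ) L S hL hS (μ L) rfl]
      exact Fin.ext (by omega)
    · rw [fv_e1 (μ := μ) L S hL hS x (by omega) hc]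
      have h1 := fv_last (μ := μ) L S hL hS L (by omega) (by omega) hL
      exact Fin.ext (by omega)
    · obtain ⟨y, hy⟩ : ∃ y : Fin (2*(n+1)), y.val = x.val - 1 := ⟨⟨x.val - 1, by omega⟩, rfl⟩
      have hyQ := cl_Q h L S hL hS hne y (by omega) (by omega)
      have h1 := fv_shift (μ := μ) L S hL hS x y (by omega) hy hc.1 hc.2 (by omega)
      have hinvy := congrArg Fin.val (h.1 y)
      have h2 := fv_shift (μ := μ) L S hL hS (fwd n μ x) (μ y) (by omega) (by omega) (by omega)
        (by omega) (by omega)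
      exact Fin.ext (by omega)
    · have h1 := fv_last (μ := μ) L S hL hS x (by omega) (by omega) hc
      have h2 := fv_e1 (μ := μ) L S hL hS (fwd n μ x) (by omega) (by omega)
      have h3 := congrArg Fin.val h2
      exact Fin.ext (by omega)
  · intro x heq
    have hv := congrArg Fin.val heq
    have hxlt := x.isLt
    rcases (by omega : x.val < (μ L).val ∨ x.val = (μ L).val ∨
        ((μ L).val < x.val ∧ x.val < (μ S).val) ∨ x.val = (μ S).val ∨ x.val = (μ S).val + 1 ∨
        ((μ S).val + 1 < x.val ∧ x.val ≤ 2*n) ∨ x.val = 2*n+1) with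
      hc | hc | hc | hc | hc | hc | hc
    · rw [fv_else (μ := μ) L S hL hS x (by omega) (by omega) (Or.inl hc)] at hv
      exact fpf h x hv
    · rw [fv_a (μ := μ) L S hL hS x hc] at hv; omega
    · rw [fv_else (μ := μ) L S hL hS x (by omega) (by omega) (Or.inr hc)] at hv
      exact fpf h x hv
    · rw [fv_e (μ := μ) L S hL hS x (by omega) hc] at hv; omega
    · have h1 := congrArg Fin.val (fv_e1 (μ := μ) L S hL hS x (by omega) hc); omega
    · obtain ⟨y, hy⟩ : ∃ y : Fin (2*(n+1)), y.val = x.val - 1 := ⟨⟨x.val - 1, by omega⟩, rfl⟩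
      have hyQ := cl_Q h L S hL hS hne y (by omega) (by omega)
      have h1 := fv_shift (μ := μ) L S hL hS x y (by omega) hy hc.1 hc.2 (by omega)
      have := fpf h y
      omega
    · have h1 := fv_last (μ := μ) L S hL hS x (by omega) (by omega) hc; omega
  · intro w x y z hwx hxy hyz h1 h2
    rw [Fin.lt_def] at hwx hxy hyz
    have hzlt := z.isLt
    have c1 := fwd_link h L S hL hS hne w y h1 (by omega)
    have c2 := fwd_link h L S hL hS hne x z h2 (by omega)
    rcases c1 with ⟨q1,q2,q3⟩|⟨q1,q2⟩|⟨q1,q2,q3⟩|⟨q1,q2⟩|⟨q1,q2,q3,q4⟩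
    · rcases c2 with ⟨r1,r2,r3⟩|⟨r1,r2⟩|⟨r1,r2,r3⟩|⟨r1,r2⟩|⟨r1,r2,r3,r4⟩
      · exact nc h (by omega : w.val < x.val) (by omega) (by omega) q3 r3
      · omega
      · omega
      · omega
      · omega
    · rcases c2 with ⟨r1,r2,r3⟩|⟨r1,r2⟩|⟨r1,r2,r3⟩|⟨r1,r2⟩|⟨r1,r2,r3,r4⟩ <;> omega
    · rcases c2 with ⟨r1,r2,r3⟩|⟨r1,r2⟩|⟨r1,r2,r3⟩|⟨r1,r2⟩|⟨r1,r2,r3,r4⟩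
      · omega
      · omega
      · exact nc h (by omega : w.val < x.val) (by omega) (by omega) q3 r3
      · omega
      · omega
    · omega
    · rcases c2 with ⟨r1,r2,r3⟩|⟨r1,r2⟩|⟨r1,r2,r3⟩|⟨r1,r2⟩|⟨r1,r2,r3,r4⟩
      · omega
      · omega
      · omega
      · omega
      · obtain ⟨W, hW⟩ : ∃ W : Fin (2*(n+1)), W.val = w.val - 1 := ⟨⟨w.val - 1, by omega⟩, rfl⟩
        obtain ⟨X, hX⟩ : ∃ X : Fin (2*(n+1)), X.val = x.val - 1 := ⟨⟨x.val - 1, by omega⟩, rfl⟩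
        have u1 := q4 W hW
        have u2 := r4 X hX
        exact nc h (a := W) (b := X) (c := μ W) (d := μ X) (by omega) (by omega) (by omega)
          rfl rfl

include h hL hS hne in
theorem fwd_exposure : exposure (n+1) (fwd n μ) = exposure (n+1) μ + 1 := by
  have hae := ae h L S hL hS hne
  have hinvL := congrArg Fin.val (h.1 L)
  rw [exposure_eq (fwd_pattern h L S hL hS hne), exposure_eq h]
  obtain ⟨E1, hE1⟩ : ∃ E1 : Fin (2*(n+1)), E1.val = (μ S).val + 1 :=
    ⟨⟨(μ S).val + 1, by omega⟩, rfl⟩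
  have hSeq : Sfin (n+1) (fwd n μ) = insert E1 (Sfin (n+1) μ) := by
    apply Finset.ext
    intro t
    rw [Finset.mem_insert, mem_Sfin, mem_Sfin]
    have htlt := t.isLt
    constructor
    · rintro ⟨t1, t2⟩
      rcases (by omega : t.val < (μ L).val ∨ t.val = (μ L).val ∨
          ((μ L).val < t.val ∧ t.val < (μ S).val) ∨ t.val = (μ S).val ∨
          t.val = (μ S).val + 1 ∨ ((μ S).val + 1 < t.val ∧ t.val ≤ 2*n) ∨ t.val = 2*n+1) with
        hc | hc | hc | hc | hc | hc | hc
      · refine Or.inr ⟨?_, ?_⟩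
        · have h1 := congrArg Fin.val (fv_else (μ := μ) L S hL hS t (by omega) (by omega) (Or.inl hc))
          omega
        · intro c hct
          have h1 := congrArg Fin.val
            (fv_else (μ := μ) L S hL hS c (by omega) (by omega) (Or.inl (by omega)))
          have := t2 c hct
          omega
      · refine Or.inr ⟨?_, ?_⟩
        · have ht : t = μ L := Fin.ext (by omega)
          have h1 : μ t = L := by rw [ht, h.1]
          have := congrArg Fin.val h1
          omega
        · intro c hct
          have h1 := congrArg Fin.val
            (fv_else (μ := μ) L S hL hS c (by omega) (by omega) (Or.inl (by omega)))
          have h2 := cl_low h L hL hne c (by omega)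
          omega
      · have h1 := congrArg Fin.val (fv_a (μ := μ) L S hL hS (μ L) rfl)
        have := t2 (μ L) (by omega)
        omega
      · have h1 := congrArg Fin.val (fv_e (μ := μ) L S hL hS t (by omega) hc)
        omega
      · exact Or.inl (Fin.ext (by omega))
      · have h1 := congrArg Fin.val (fv_e1 (μ := μ) L S hL hS E1 (by omega) hE1)
        have := t2 E1 (by omega)
        omega
      · have h1 := fv_last (μ := μ) L S hL hS t (by omega) (by omega) hc
        omega
    · rintro (ht | ⟨t1, t2⟩)
      · have htv := congrArg Fin.val ht
        constructor
        · have h1 := congrArg Fin.val (fv_e1 (μ := μ) L S hL hS t (by omega) (by omega))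
          omega
        · intro c hct
          have hclt := c.isLt
          rcases (by omega : c.val < (μ L).val ∨ c.val = (μ L).val ∨
              ((μ L).val < c.val ∧ c.val < (μ S).val) ∨ c.val = (μ S).val) with
            hd | hd | hd | hd
          · have h1 := congrArg Fin.val (fv_else (μ := μ) L S hL hS c (by omega) (by omega) (Or.inl hd))
            have := cl_low h L hL hne c hd
            omega
          · have h1 := congrArg Fin.val (fv_a (μ := μ) L S hL hS c hd)
            omega
          · have h1 := congrArg Fin.val (fv_else (μ := μ) L S hL hS c (by omega) (by omega) (Or.inr hd))
            have := cl_mid h L S hL hS hne c hd.1 hd.2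
            omega
          · have h1 := congrArg Fin.val (fv_e (μ := μ) L S hL hS c (by omega) hd)
            omega
      · have hta : t.val ≤ (μ L).val := by
          by_contra hgt
          have := t2 (μ L) (by omega)
          omega
        rcases (by omega : t.val < (μ L).val ∨ t.val = (μ L).val) with hd | hd
        · constructor
          · have h1 := congrArg Fin.val (fv_else (μ := μ) L S hL hS t (by omega) (by omega) (Or.inl hd))
            omega
          · intro c hct
            have h1 := congrArg Fin.val
              (fv_else (μ := μ) L S hL hS c (by omega) (by omega) (Or.inl (by omega)))
            have := t2 c hct
            omega
        · constructor
          · have h1 := congrArg Fin.val (fv_a (μ := μ) L S hL hS t hd)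
            omega
          · intro c hct
            have h1 := congrArg Fin.val
              (fv_else (μ := μ) L S hL hS c (by omega) (by omega) (Or.inl (by omega)))
            have := cl_low h L hL hne c (by omega)
            omega
  rw [hSeq, Finset.card_insert_of_notMem]
  intro hmem
  rw [mem_Sfin] at hmem
  have := hmem.2 (μ L) (by omega)
  omega

end Case2b

section Case2c

variable {n : ℕ}

def bwd (n : ℕ) (ν : Fin (2*(n+1)) → Fin (2*(n+1))) : Fin (2*(n+1)) → Fin (2*(n+1)) :=
  fun x =>
    if x.val = (ν ⟨(ν ⟨2*n+1, by omega⟩).val - 1,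
        by have := (ν (⟨2*n+1, by omega⟩ : Fin (2*(n+1)))).isLt; omega⟩).val then
      ⟨2*n+1, by omega⟩
    else if x.val = 2*n+1 then
      ν ⟨(ν ⟨2*n+1, by omega⟩).val - 1,
        by have := (ν (⟨2*n+1, by omega⟩ : Fin (2*(n+1)))).isLt; omega⟩
    else if x.val = (ν ⟨2*n+1, by omega⟩).val - 1 then ⟨2*n, by omega⟩
    else if x.val = 2*n then
      ⟨(ν ⟨2*n+1, by omega⟩).val - 1,
        by have := (ν (⟨2*n+1, by omega⟩ : Fin (2*(n+1)))).isLt; omega⟩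
    else if h : (ν ⟨2*n+1, by omega⟩).val - 1 < x.val ∧ x.val + 3 ≤ 2*(n+1) then
      ⟨(ν ⟨x.val + 1, by omega⟩).val - 1,
        by have := (ν (⟨x.val + 1, by omega⟩ : Fin (2*(n+1)))).isLt; omega⟩
    else ν x

variable {ν : Fin (2*(n+1)) → Fin (2*(n+1))}

theorem bwd_eq (L S E : Fin (2*(n+1))) (hL : L.val = 2*n+1) (hS : S.val = 2*n)
    (hE : E.val = (ν L).val - 1) (x : Fin (2*(n+1))) :
    bwd n ν x =
    (if x.val = (ν E).val then L
     else if x.val = 2*n+1 then ν E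
     else if x.val = (ν L).val - 1 then S
     else if x.val = 2*n then E
     else if h : (ν L).val - 1 < x.val ∧ x.val + 3 ≤ 2*(n+1) then
       ⟨(ν ⟨x.val + 1, by omega⟩).val - 1,
         by have := (ν (⟨x.val + 1, by omega⟩ : Fin (2*(n+1)))).isLt; omega⟩
     else ν x) := by
  simp only [bwd,
    show (⟨2*n+1, by omega⟩ : Fin (2*(n+1))) = L from Fin.ext (by rw [Fin.val_mk, hL]),
    show (⟨2*n, by omega⟩ : Fin (2*(n+1))) = S from Fin.ext (by rw [Fin.val_mk, hS]),
    show (⟨(ν L).val - 1, by have := (ν L).isLt; omega⟩ : Fin (2*(n+1))) = E from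
      Fin.ext (by rw [Fin.val_mk, hE])]

variable (hν : IsLinkPattern (n+1) ν) (L S E : Fin (2*(n+1)))
  (hL : L.val = 2*n+1) (hS : S.val = 2*n) (hE : E.val = (ν L).val - 1)
  (hp : 2 ≤ (ν L).val)

include hν hL in
theorem b_p_le : (ν L).val ≤ 2*n := by
  have := fpf hν L
  have := (ν L).isLt
  omega

include hν hL hE hp in
theorem b_a_lt : (ν E).val < (ν L).val - 1 := by
  have hple := b_p_le hν L hL
  have h1 := fpf hν E
  have h2 : (ν E).val ≠ (ν L).val := fun hh => by
    have := congrArg Fin.val (inj hν (Fin.ext hh : ν E = ν L)); omega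
  have h3 : ¬ ((ν L).val < (ν E).val ∧ (ν E).val < 2*n+1) := by
    rintro ⟨u1, u2⟩
    exact nc hν (a := E) (b := ν L) (c := ν E) (d := L) (by omega) u1 (by omega) rfl (hν.1 L)
  have h4 : (ν E).val ≠ 2*n+1 := fun hh => by
    have h5 : ν E = L := Fin.ext (by omega)
    have h6 := congrArg Fin.val (hν.1 E)
    rw [h5] at h6
    omega
  have := (ν E).isLt
  omega

include hν hL in
theorem bcl_Q (x : Fin (2*(n+1))) (h1 : (ν L).val < x.val) (h2 : x.val < 2*n+1) :
    (ν L).val < (ν x).val ∧ (ν x).val < 2*n+1 := by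
  have hinvL := congrArg Fin.val (hν.1 L)
  obtain ⟨w1, w2⟩ := mem_inside hν (x := ν L) (c := x) (by omega) (by omega) (by omega)
  omega

include hν hL hE hp in
theorem bcl_mid (x : Fin (2*(n+1))) (h1 : (ν E).val < x.val) (h2 : x.val < (ν L).val - 1) :
    (ν E).val < (ν x).val ∧ (ν x).val < (ν L).val - 1 := by
  have haE := b_a_lt hν L E hL hE hp
  have hinvE := congrArg Fin.val (hν.1 E)
  obtain ⟨w1, w2⟩ := mem_inside hν (x := ν E) (c := x) (by omega) (by omega) (by omega)
  omega

include hν hL hE hp in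
theorem bcl_low (x : Fin (2*(n+1))) (hx : x.val < (ν E).val) : (ν x).val < (ν E).val := by
  have haE := b_a_lt hν L E hL hE hp
  have hple := b_p_le hν L hL
  have hinvE := congrArg Fin.val (hν.1 E)
  have hinvL := congrArg Fin.val (hν.1 L)
  have h1 : (ν x).val ≠ (ν E).val := fun hh => by
    have := congrArg Fin.val (inj hν (Fin.ext hh : ν x = ν E)); omega
  have h2 : ¬ ((ν E).val < (ν x).val ∧ (ν x).val < (ν L).val - 1) := by
    rintro ⟨u1, u2⟩
    obtain ⟨w1, w2⟩ := bcl_mid hν L E hL hE hp (ν x) u1 u2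
    have := congrArg Fin.val (hν.1 x)
    omega
  have h3 : (ν x).val ≠ E.val := fun hh => by
    have h5 : ν x = E := Fin.ext (by omega)
    have h6 := congrArg Fin.val (hν.1 x)
    rw [h5] at h6
    omega
  have h4 : (ν x).val ≠ (ν L).val := fun hh => by
    have := congrArg Fin.val (inj hν (Fin.ext hh : ν x = ν L)); omega
  have h5 : ¬ ((ν L).val < (ν x).val ∧ (ν x).val < 2*n+1) := by
    rintro ⟨u1, u2⟩
    obtain ⟨w1, w2⟩ := bcl_Q hν L hL (ν x) u1 u2
    have := congrArg Fin.val (hν.1 x)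
    omega
  have h6 : (ν x).val ≠ 2*n+1 := fun hh => by
    have h7 : ν x = L := Fin.ext (by omega)
    have h8 := congrArg Fin.val (hν.1 x)
    rw [h7] at h8
    omega
  have := (ν x).isLt
  omega

end Case2c

section Case2d

variable {n : ℕ} {ν : Fin (2*(n+1)) → Fin (2*(n+1))}
variable (L S E : Fin (2*(n+1)))
  (hL : L.val = 2*n+1) (hS : S.val = 2*n) (hE : E.val = (ν L).val - 1)
  (haE : (ν E).val < (ν L).val - 1) (hp : 2 ≤ (ν L).val) (hple : (ν L).val ≤ 2*n)

include hL hS hE in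
theorem bv_a (x : Fin (2*(n+1))) (hx : x.val = (ν E).val) : bwd n ν x = L := by
  rw [bwd_eq L S E hL hS hE, if_pos hx]

include hL hS hE haE hp hple in
theorem bv_last (x : Fin (2*(n+1))) (hx : x.val = 2*n+1) : bwd n ν x = ν E := by
  rw [bwd_eq L S E hL hS hE, if_neg (by omega), if_pos hx]

include hL hS hE haE hp hple in
theorem bv_e (x : Fin (2*(n+1))) (hx : x.val = (ν L).val - 1) : bwd n ν x = S := by
  rw [bwd_eq L S E hL hS hE, if_neg (by omega), if_neg (by omega), if_pos hx]

include hL hS hE haE hp hple in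
theorem bv_S (x : Fin (2*(n+1))) (hx : x.val = 2*n) : bwd n ν x = E := by
  rw [bwd_eq L S E hL hS hE, if_neg (by omega), if_neg (by omega), if_neg (by omega), if_pos hx]

include hL hS hE haE hp hple in
theorem bv_shift (x y : Fin (2*(n+1))) (hy : y.val = x.val + 1)
    (h1 : (ν L).val - 1 < x.val) (h2 : x.val ≤ 2*n - 1) : (bwd n ν x).val = (ν y).val - 1 := by
  rw [bwd_eq L S E hL hS hE, if_neg (by omega), if_neg (by omega), if_neg (by omega),
    if_neg (by omega), dif_pos ⟨h1, by omega⟩, Fin.val_mk,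
    show (⟨x.val + 1, by omega⟩ : Fin (2*(n+1))) = y from Fin.ext (by rw [Fin.val_mk]; omega)]

include hL hS hE haE hp hple in
theorem bv_else (x : Fin (2*(n+1)))
    (hx : x.val < (ν E).val ∨ ((ν E).val < x.val ∧ x.val < (ν L).val - 1)) :
    bwd n ν x = ν x := by
  rw [bwd_eq L S E hL hS hE, if_neg (by omega), if_neg (by omega), if_neg (by omega),
    if_neg (by omega), dif_neg (by omega)]

end Case2d

section Case2e

variable {n : ℕ} {ν : Fin (2*(n+1)) → Fin (2*(n+1))}
variable (hν : IsLinkPattern (n+1) ν) (L S E : Fin (2*(n+1)))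
  (hL : L.val = 2*n+1) (hS : S.val = 2*n) (hE : E.val = (ν L).val - 1)
  (hp : 2 ≤ (ν L).val)

include hν hL hS hE hp in
theorem bwd_link (u v : Fin (2*(n+1))) (huv : bwd n ν u = v) (hlt : u.val < v.val) :
    (u.val < (ν E).val ∧ v.val < (ν E).val ∧ ν u = v) ∨
    (u.val = (ν E).val ∧ v.val = 2*n+1) ∨
    ((ν E).val < u.val ∧ v.val < (ν L).val - 1 ∧ ν u = v) ∨
    (u.val = (ν L).val - 1 ∧ v.val = 2*n) ∨
    ((ν L).val - 1 < u.val ∧ u.val ≤ 2*n - 1 ∧ v.val ≤ 2*n - 1 ∧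
      ∀ w : Fin (2*(n+1)), w.val = u.val + 1 → (ν w).val = v.val + 1) := by
  have haE := b_a_lt hν L E hL hE hp
  have hple := b_p_le hν L hL
  have hult := u.isLt
  have hvlt := v.isLt
  rcases (by omega : u.val < (ν E).val ∨ u.val = (ν E).val ∨
      ((ν E).val < u.val ∧ u.val < (ν L).val - 1) ∨ u.val = (ν L).val - 1 ∨
      ((ν L).val - 1 < u.val ∧ u.val ≤ 2*n - 1) ∨ u.val = 2*n ∨ u.val = 2*n+1) with
    hc | hc | hc | hc | hc | hc | hc
  · rw [bv_else L S E hL hS hE haE hp hple u (Or.inl hc)] at huv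
    have h2 := bcl_low hν L E hL hE hp u hc
    have h3 := congrArg Fin.val huv
    exact Or.inl ⟨hc, by omega, huv⟩
  · rw [bv_a L S E hL hS hE u hc] at huv
    have h3 := congrArg Fin.val huv
    exact Or.inr (Or.inl ⟨hc, by omega⟩)
  · rw [bv_else L S E hL hS hE haE hp hple u (Or.inr hc)] at huv
    have h2 := bcl_mid hν L E hL hE hp u hc.1 hc.2
    have h3 := congrArg Fin.val huv
    exact Or.inr (Or.inr (Or.inl ⟨hc.1, by omega, huv⟩))
  · rw [bv_e L S E hL hS hE haE hp hple u hc] at huv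
    have h3 := congrArg Fin.val huv
    exact Or.inr (Or.inr (Or.inr (Or.inl ⟨hc, by omega⟩)))
  · obtain ⟨y, hy⟩ : ∃ y : Fin (2*(n+1)), y.val = u.val + 1 := ⟨⟨u.val + 1, by omega⟩, rfl⟩
    have hyQ := bcl_Q hν L hL y (by omega) (by omega)
    have h1 := bv_shift L S E hL hS hE haE hp hple u y hy hc.1 hc.2
    have h3 := congrArg Fin.val huv
    refine Or.inr (Or.inr (Or.inr (Or.inr ⟨hc.1, hc.2, by omega, ?_⟩)))
    intro w hw
    rw [show w = y from Fin.ext (by omega)]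
    omega
  · rw [bv_S L S E hL hS hE haE hp hple u hc] at huv
    have h3 := congrArg Fin.val huv
    omega
  · rw [bv_last L S E hL hS hE haE hp hple u hc] at huv
    have h3 := congrArg Fin.val huv
    omega

include hν hL hS hE hp in
theorem bwd_pattern : IsLinkPattern (n+1) (bwd n ν) := by
  have haE := b_a_lt hν L E hL hE hp
  have hple := b_p_le hν L hL
  refine ⟨?_, ?_, ?_⟩
  · intro x
    have hxlt := x.isLt
    rcases (by omega : x.val < (ν E).val ∨ x.val = (ν E).val ∨
        ((ν E).val < x.val ∧ x.val < (ν L).val - 1) ∨ x.val = (ν L).val - 1 ∨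
        ((ν L).val - 1 < x.val ∧ x.val ≤ 2*n - 1) ∨ x.val = 2*n ∨ x.val = 2*n+1) with
      hc | hc | hc | hc | hc | hc | hc
    · rw [bv_else L S E hL hS hE haE hp hple x (Or.inl hc),
        bv_else L S E hL hS hE haE hp hple (ν x) (Or.inl (bcl_low hν L E hL hE hp x hc))]
      exact hν.1 x
    · rw [bv_a L S E hL hS hE x hc, bv_last L S E hL hS hE haE hp hple L hL]
      exact Fin.ext (by omega)
    · rw [bv_else L S E hL hS hE haE hp hple x (Or.inr hc),
        bv_else L S E hL hS hE haE hp hple (ν x)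
          (Or.inr (bcl_mid hν L E hL hE hp x hc.1 hc.2))]
      exact hν.1 x
    · rw [bv_e L S E hL hS hE haE hp hple x hc, bv_S L S E hL hS hE haE hp hple S hS]
      exact Fin.ext (by omega)
    · obtain ⟨y, hy⟩ : ∃ y : Fin (2*(n+1)), y.val = x.val + 1 := ⟨⟨x.val + 1, by omega⟩, rfl⟩
      have hyQ := bcl_Q hν L hL y (by omega) (by omega)
      have h1 := bv_shift L S E hL hS hE haE hp hple x y hy hc.1 hc.2
      have hinvy := congrArg Fin.val (hν.1 y)
      have h2 := bv_shift L S E hL hS hE haE hp hple (bwd n ν x) (ν y) (by omega) (by omega)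
        (by omega)
      exact Fin.ext (by omega)
    · rw [bv_S L S E hL hS hE haE hp hple x hc, bv_e L S E hL hS hE haE hp hple E (by omega)]
      exact Fin.ext (by omega)
    · rw [bv_last L S E hL hS hE haE hp hple x hc, bv_a L S E hL hS hE (ν E) rfl]
      exact Fin.ext (by omega)
  · intro x heq
    have hv := congrArg Fin.val heq
    have hxlt := x.isLt
    rcases (by omega : x.val < (ν E).val ∨ x.val = (ν E).val ∨
        ((ν E).val < x.val ∧ x.val < (ν L).val - 1) ∨ x.val = (ν L).val - 1 ∨
        ((ν L).val - 1 < x.val ∧ x.val ≤ 2*n - 1) ∨ x.val = 2*n ∨ x.val = 2*n+1) with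
      hc | hc | hc | hc | hc | hc | hc
    · rw [bv_else L S E hL hS hE haE hp hple x (Or.inl hc)] at hv
      exact fpf hν x hv
    · rw [bv_a L S E hL hS hE x hc] at hv; omega
    · rw [bv_else L S E hL hS hE haE hp hple x (Or.inr hc)] at hv
      exact fpf hν x hv
    · rw [bv_e L S E hL hS hE haE hp hple x hc] at hv; omega
    · obtain ⟨y, hy⟩ : ∃ y : Fin (2*(n+1)), y.val = x.val + 1 := ⟨⟨x.val + 1, by omega⟩, rfl⟩
      have hyQ := bcl_Q hν L hL y (by omega) (by omega)
      have h1 := bv_shift L S E hL hS hE haE hp hple x y hy hc.1 hc.2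
      have := fpf hν y
      omega
    · rw [bv_S L S E hL hS hE haE hp hple x hc] at hv; omega
    · rw [bv_last L S E hL hS hE haE hp hple x hc] at hv; omega
  · intro w x y z hwx hxy hyz h1 h2
    rw [Fin.lt_def] at hwx hxy hyz
    have hzlt := z.isLt
    have c1 := bwd_link hν L S E hL hS hE hp w y h1 (by omega)
    have c2 := bwd_link hν L S E hL hS hE hp x z h2 (by omega)
    have haE2 := b_a_lt hν L E hL hE hp
    rcases c1 with ⟨q1,q2,q3⟩|⟨q1,q2⟩|⟨q1,q2,q3⟩|⟨q1,q2⟩|⟨q1,q2,q3,q4⟩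
    · rcases c2 with ⟨r1,r2,r3⟩|⟨r1,r2⟩|⟨r1,r2,r3⟩|⟨r1,r2⟩|⟨r1,r2,r3,r4⟩
      · exact nc hν (by omega : w.val < x.val) (by omega) (by omega) q3 r3
      · omega
      · omega
      · omega
      · omega
    · rcases c2 with ⟨r1,r2,r3⟩|⟨r1,r2⟩|⟨r1,r2,r3⟩|⟨r1,r2⟩|⟨r1,r2,r3,r4⟩ <;> omega
    · rcases c2 with ⟨r1,r2,r3⟩|⟨r1,r2⟩|⟨r1,r2,r3⟩|⟨r1,r2⟩|⟨r1,r2,r3,r4⟩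
      · omega
      · omega
      · exact nc hν (by omega : w.val < x.val) (by omega) (by omega) q3 r3
      · omega
      · omega
    · rcases c2 with ⟨r1,r2,r3⟩|⟨r1,r2⟩|⟨r1,r2,r3⟩|⟨r1,r2⟩|⟨r1,r2,r3,r4⟩ <;> omega
    · rcases c2 with ⟨r1,r2,r3⟩|⟨r1,r2⟩|⟨r1,r2,r3⟩|⟨r1,r2⟩|⟨r1,r2,r3,r4⟩
      · omega
      · omega
      · omega
      · omega
      · obtain ⟨W, hW⟩ : ∃ W : Fin (2*(n+1)), W.val = w.val + 1 := ⟨⟨w.val + 1, by omega⟩, rfl⟩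
        obtain ⟨X, hX⟩ : ∃ X : Fin (2*(n+1)), X.val = x.val + 1 := ⟨⟨x.val + 1, by omega⟩, rfl⟩
        have u1 := q4 W hW
        have u2 := r4 X hX
        exact nc hν (a := W) (b := X) (c := ν W) (d := ν X) (by omega) (by omega) (by omega)
          rfl rfl

end Case2e

section Case2f

variable {n : ℕ}

theorem bwd_fwd {μ : Fin (2*(n+1)) → Fin (2*(n+1))} (h : IsLinkPattern (n+1) μ)
    (L S : Fin (2*(n+1))) (hL : L.val = 2*n+1) (hS : S.val = 2*n)
    (hne : (μ L).val ≠ 2*n) : bwd n (fwd n μ) = μ := by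
  have hae := ae h L S hL hS hne
  have hpv := fv_last (μ := μ) L S hL hS L (by omega) (by omega) hL
  have hE : (μ S).val = (fwd n μ L).val - 1 := by omega
  have hνE : fwd n μ (μ S) = μ L := fv_e (μ := μ) L S hL hS (μ S) (by omega) rfl
  have hνEv := congrArg Fin.val hνE
  have haE : ((fwd n μ) (μ S)).val < ((fwd n μ) L).val - 1 := by omega
  have hp2 : 2 ≤ ((fwd n μ) L).val := by omega
  have hple : ((fwd n μ) L).val ≤ 2*n := by omega
  funext x
  apply Fin.ext
  have hxlt := x.isLt
  rcases (by omega : x.val < (μ L).val ∨ x.val = (μ L).val ∨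
      ((μ L).val < x.val ∧ x.val < (μ S).val) ∨ x.val = (μ S).val ∨
      ((μ S).val < x.val ∧ x.val ≤ 2*n - 1) ∨ x.val = 2*n ∨ x.val = 2*n+1) with
    hc | hc | hc | hc | hc | hc | hc
  · rw [bv_else L S (μ S) hL hS hE haE hp2 hple x (Or.inl (by omega)),
      fv_else (μ := μ) L S hL hS x (by omega) (by omega) (Or.inl hc)]
  · rw [bv_a L S (μ S) hL hS hE x (by omega), show x = μ L from Fin.ext (by omega), h.1]
  · rw [bv_else L S (μ S) hL hS hE haE hp2 hple x (Or.inr (by omega)),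
      fv_else (μ := μ) L S hL hS x (by omega) (by omega) (Or.inr hc)]
  · rw [bv_e L S (μ S) hL hS hE haE hp2 hple x (by omega),
      show x = μ S from Fin.ext (by omega), h.1]
  · obtain ⟨y, hy⟩ : ∃ y : Fin (2*(n+1)), y.val = x.val + 1 := ⟨⟨x.val + 1, by omega⟩, rfl⟩
    have h1 := bv_shift L S (μ S) hL hS hE haE hp2 hple x y hy (by omega) (by omega)
    have hq := cl_Q h L S hL hS hne x (by omega) (by omega)
    have h2 := fv_shift (μ := μ) L S hL hS y x (by omega) (by omega) (by omega) (by omega)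
      (by omega)
    omega
  · rw [bv_S L S (μ S) hL hS hE haE hp2 hple x hc, show x = S from Fin.ext (by omega)]
  · rw [bv_last L S (μ S) hL hS hE haE hp2 hple x hc, hνE,
      show x = L from Fin.ext (by omega)]

theorem fwd_bwd {ν : Fin (2*(n+1)) → Fin (2*(n+1))} (hν : IsLinkPattern (n+1) ν)
    (L S E : Fin (2*(n+1))) (hL : L.val = 2*n+1) (hS : S.val = 2*n)
    (hE : E.val = (ν L).val - 1) (hp : 2 ≤ (ν L).val) : fwd n (bwd n ν) = ν := by
  have haE := b_a_lt hν L E hL hE hp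
  have hple := b_p_le hν L hL
  have hmL : bwd n ν L = ν E := bv_last L S E hL hS hE haE hp hple L hL
  have hmLv := congrArg Fin.val hmL
  have hmS : bwd n ν S = E := bv_S L S E hL hS hE haE hp hple S hS
  have hmSv := congrArg Fin.val hmS
  have hEv : E.val = (ν L).val - 1 := hE
  funext x
  apply Fin.ext
  have hxlt := x.isLt
  rcases (by omega : x.val < (ν E).val ∨ x.val = (ν E).val ∨
      ((ν E).val < x.val ∧ x.val < (ν L).val - 1) ∨ x.val = (ν L).val - 1 ∨
      x.val = (ν L).val ∨ ((ν L).val < x.val ∧ x.val ≤ 2*n) ∨ x.val = 2*n+1) with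
    hc | hc | hc | hc | hc | hc | hc
  · rw [fv_else (μ := bwd n ν) L S hL hS x (by omega) (by omega) (Or.inl (by omega)),
      bv_else L S E hL hS hE haE hp hple x (Or.inl hc)]
  · rw [fv_a (μ := bwd n ν) L S hL hS x (by omega), hmS,
      show x = ν E from Fin.ext (by omega), hν.1]
  · rw [fv_else (μ := bwd n ν) L S hL hS x (by omega) (by omega) (Or.inr (by omega)),
      bv_else L S E hL hS hE haE hp hple x (Or.inr hc)]
  · rw [fv_e (μ := bwd n ν) L S hL hS x (by omega) (by omega), hmL,
      show x = E from Fin.ext (by omega)]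
  · rw [fv_e1 (μ := bwd n ν) L S hL hS x (by omega) (by omega),
      show x = ν L from Fin.ext (by omega), hν.1]
  · obtain ⟨y, hy⟩ : ∃ y : Fin (2*(n+1)), y.val = x.val - 1 := ⟨⟨x.val - 1, by omega⟩, rfl⟩
    have hq := bcl_Q hν L hL x (by omega) (by omega)
    have h1 := bv_shift L S E hL hS hE haE hp hple y x (by omega) (by omega) (by omega)
    have h2 := fv_shift (μ := bwd n ν) L S hL hS x y (by omega) (by omega) (by omega)
      (by omega) (by omega)
    omega
  · have h1 := fv_last (μ := bwd n ν) L S hL hS x (by omega) (by omega) hc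
    have hxL : x = L := Fin.ext (by omega)
    rw [hxL] at h1 ⊢
    omega

theorem bwd_exposure {ν : Fin (2*(n+1)) → Fin (2*(n+1))} (hν : IsLinkPattern (n+1) ν)
    (L S E : Fin (2*(n+1))) (hL : L.val = 2*n+1) (hS : S.val = 2*n)
    (hE : E.val = (ν L).val - 1) (hp : 2 ≤ (ν L).val) :
    exposure (n+1) ν = exposure (n+1) (bwd n ν) + 1 := by
  have hP' := bwd_pattern hν L S E hL hS hE hp
  have haE := b_a_lt hν L E hL hE hp
  have hple := b_p_le hν L hL
  have hmLv := congrArg Fin.val (bv_last L S E hL hS hE haE hp hple L hL)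
  have hne' : ((bwd n ν) L).val ≠ 2*n := by omega
  have h2 := fwd_exposure hP' L S hL hS hne'
  rw [fwd_bwd hν L S E hL hS hE hp] at h2
  omega

theorem exposure_one_of_lastzero {ν : Fin (2*(n+1)) → Fin (2*(n+1))}
    (hν : IsLinkPattern (n+1) ν) (L : Fin (2*(n+1))) (hL : L.val = 2*n+1)
    (h0 : (ν L).val = 0) : exposure (n+1) ν = 1 := by
  rw [exposure_eq hν]
  have hinvL := congrArg Fin.val (hν.1 L)
  refine Finset.card_eq_one.mpr ⟨ν L, ?_⟩
  apply Finset.eq_singleton_iff_unique_mem.mpr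
  constructor
  · rw [mem_Sfin]
    exact ⟨by omega, fun c hc => by omega⟩
  · intro x hx
    rw [mem_Sfin] at hx
    have hxlt := x.isLt
    by_contra hne
    have hxv : x.val ≠ 0 := fun hh => hne (Fin.ext (by omega))
    have h1 := hx.2 (ν L) (by omega)
    have h2 := hx.1
    have h3 := (ν x).isLt
    omega

theorem lastone_false {ν : Fin (2*(n+1)) → Fin (2*(n+1))}
    (hν : IsLinkPattern (n+1) ν) (L : Fin (2*(n+1))) (hL : L.val = 2*n+1)
    (h1 : (ν L).val = 1) : False := by
  obtain ⟨Z, hZ⟩ : ∃ Z : Fin (2*(n+1)), Z.val = 0 := ⟨⟨0, by omega⟩, rfl⟩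
  have hinvL := congrArg Fin.val (hν.1 L)
  have e1 : (ν Z).val ≠ 0 := fun hh => fpf hν Z (by omega)
  have e2 : (ν Z).val ≠ 1 := fun hh => by
    have h5 : ν Z = ν L := Fin.ext (by omega)
    have := congrArg Fin.val (inj hν h5)
    omega
  have e3 : ¬ (1 < (ν Z).val ∧ (ν Z).val < 2*n+1) := by
    rintro ⟨u1, u2⟩
    exact nc hν (a := Z) (b := ν L) (c := ν Z) (d := L) (by omega) (by omega) (by omega) rfl (hν.1 L)
  have e4 : (ν Z).val ≠ 2*n+1 := fun hh => by
    have h5 : ν Z = L := Fin.ext (by omega)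
    have h6 := congrArg Fin.val (hν.1 Z)
    rw [h5] at h6
    omega
  have := (ν Z).isLt
  omega

theorem last_ge_two {ν : Fin (2*(n+1)) → Fin (2*(n+1))}
    (hν : IsLinkPattern (n+1) ν) (L : Fin (2*(n+1))) (hL : L.val = 2*n+1)
    (hE2 : 2 ≤ exposure (n+1) ν) : 2 ≤ (ν L).val := by
  by_contra hlt
  rcases (by omega : (ν L).val = 0 ∨ (ν L).val = 1) with h0 | h1
  · have := exposure_one_of_lastzero hν L hL h0
    omega
  · exact lastone_false hν L hL h1

end Case2f

section Assemble

variable {n : ℕ}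

def lastP (n : ℕ) (μ : Fin (2*(n+1)) → Fin (2*(n+1))) : Prop :=
  (μ ⟨2*n+1, by omega⟩).val = 2*n

theorem lastP_iff {μ : Fin (2*(n+1)) → Fin (2*(n+1))} :
    lastP n μ ↔ ∀ j : Fin (2*(n+1)), j.val = 2*n+1 → (μ j).val = 2*n := by
  constructor
  · intro hp j hj
    rw [show j = (⟨2*n+1, by omega⟩ : Fin (2*(n+1))) from Fin.ext (by rw [hj, Fin.val_mk])]
    exact hp
  · intro hall
    exact hall _ (by rw [Fin.val_mk])

noncomputable def equiv1 (n k : ℕ) :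
    {x : {μ : Fin (2*(n+1)) → Fin (2*(n+1)) //
        IsLinkPattern (n+1) μ ∧ exposure (n+1) μ = k+1} // lastP n x.1} ≃
    {μ' : Fin (2*n) → Fin (2*n) // IsLinkPattern n μ' ∧ exposure n μ' = k} where
  toFun x := ⟨res n x.1.1, res_pattern x.1.2.1 (lastP_iff.mp x.2), by
    have hl := lastP_iff.mp x.2
    have h1 := ext_exposure (res_pattern x.1.2.1 hl)
    rw [ext_res x.1.2.1 hl] at h1
    have := x.1.2.2
    omega⟩
  invFun y := ⟨⟨ext n y.1, ext_pattern y.2.1, by rw [ext_exposure y.2.1, y.2.2]⟩, by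
    rw [lastP_iff]
    intro j hj
    rw [ext_val_hi j (by omega)]
    omega⟩
  left_inv x := Subtype.ext (Subtype.ext (ext_res x.1.2.1 (lastP_iff.mp x.2)))
  right_inv y := Subtype.ext res_ext

noncomputable def equiv2 (n k : ℕ) :
    {x : {μ : Fin (2*(n+1)) → Fin (2*(n+1)) //
        IsLinkPattern (n+1) μ ∧ exposure (n+1) μ = k+1} // ¬ lastP n x.1} ≃
    {ν : Fin (2*(n+1)) → Fin (2*(n+1)) //
        IsLinkPattern (n+1) ν ∧ exposure (n+1) ν = k+2} where
  toFun x := ⟨fwd n x.1.1, by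
    obtain ⟨L, hL⟩ : ∃ L : Fin (2*(n+1)), L.val = 2*n+1 := ⟨⟨2*n+1, by omega⟩, rfl⟩
    obtain ⟨S, hS⟩ : ∃ S : Fin (2*(n+1)), S.val = 2*n := ⟨⟨2*n, by omega⟩, rfl⟩
    have hP := x.1.2.1
    have hEx := x.1.2.2
    have hne : (x.1.1 L).val ≠ 2*n := fun hh =>
      x.2 (lastP_iff.mpr (fun j hj => by
        rw [show j = L from Fin.ext (by omega)]; exact hh))
    exact ⟨fwd_pattern hP L S hL hS hne, by rw [fwd_exposure hP L S hL hS hne, hEx]⟩⟩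
  invFun y := ⟨⟨bwd n y.1, (by
      obtain ⟨L, hL⟩ : ∃ L : Fin (2*(n+1)), L.val = 2*n+1 := ⟨⟨2*n+1, by omega⟩, rfl⟩
      obtain ⟨S, hS⟩ : ∃ S : Fin (2*(n+1)), S.val = 2*n := ⟨⟨2*n, by omega⟩, rfl⟩
      obtain ⟨E, hE⟩ : ∃ E : Fin (2*(n+1)), E.val = (y.1 L).val - 1 :=
        ⟨⟨(y.1 L).val - 1, by have := (y.1 L).isLt; omega⟩, rfl⟩
      have hP := y.2.1
      have hEx := y.2.2
      have hp := last_ge_two hP L hL (by omega)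
      have hexp := bwd_exposure hP L S E hL hS hE hp
      exact ⟨bwd_pattern hP L S E hL hS hE hp, by omega⟩)⟩, (by
      show ¬ lastP n (bwd n y.1)
      obtain ⟨L, hL⟩ : ∃ L : Fin (2*(n+1)), L.val = 2*n+1 := ⟨⟨2*n+1, by omega⟩, rfl⟩
      obtain ⟨S, hS⟩ : ∃ S : Fin (2*(n+1)), S.val = 2*n := ⟨⟨2*n, by omega⟩, rfl⟩
      obtain ⟨E, hE⟩ : ∃ E : Fin (2*(n+1)), E.val = (y.1 L).val - 1 :=
        ⟨⟨(y.1 L).val - 1, by have := (y.1 L).isLt; omega⟩, rfl⟩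
      have hP := y.2.1
      have hEx := y.2.2
      have hp := last_ge_two hP L hL (by omega)
      have haE := b_a_lt hP L E hL hE hp
      have hple := b_p_le hP L hL
      have hmLv := congrArg Fin.val (bv_last L S E hL hS hE haE hp hple L hL)
      intro hlast
      have := lastP_iff.mp hlast L hL
      omega)⟩
  left_inv x := by
    apply Subtype.ext
    apply Subtype.ext
    obtain ⟨L, hL⟩ : ∃ L : Fin (2*(n+1)), L.val = 2*n+1 := ⟨⟨2*n+1, by omega⟩, rfl⟩
    obtain ⟨S, hS⟩ : ∃ S : Fin (2*(n+1)), S.val = 2*n := ⟨⟨2*n, by omega⟩, rfl⟩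
    have hne : (x.1.1 L).val ≠ 2*n := fun hh =>
      x.2 (lastP_iff.mpr (fun j hj => by
        rw [show j = L from Fin.ext (by omega)]; exact hh))
    exact bwd_fwd x.1.2.1 L S hL hS hne
  right_inv y := by
    apply Subtype.ext
    obtain ⟨L, hL⟩ : ∃ L : Fin (2*(n+1)), L.val = 2*n+1 := ⟨⟨2*n+1, by omega⟩, rfl⟩
    obtain ⟨S, hS⟩ : ∃ S : Fin (2*(n+1)), S.val = 2*n := ⟨⟨2*n, by omega⟩, rfl⟩
    obtain ⟨E, hE⟩ : ∃ E : Fin (2*(n+1)), E.val = (y.1 L).val - 1 :=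
      ⟨⟨(y.1 L).val - 1, by have := (y.1 L).isLt; omega⟩, rfl⟩
    have hp := last_ge_two y.2.1 L hL (by have := y.2.2; omega)
    exact fwd_bwd y.2.1 L S E hL hS hE hp

theorem A_rec (n k : ℕ) : A (n+1) (k+1) = A n k + A (n+1) (k+2) := by
  classical
  have hsum := Nat.card_congr (Equiv.sumCompl
    (p := fun x : {μ : Fin (2*(n+1)) → Fin (2*(n+1)) //
        IsLinkPattern (n+1) μ ∧ exposure (n+1) μ = k+1} => lastP n x.1))
  rw [Nat.card_sum] at hsum
  have h1 := Nat.card_congr (equiv1 n k)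
  have h2 := Nat.card_congr (equiv2 n k)
  rw [A, A, A]
  omega

end Assemble

theorem A_diag : ∀ m : ℕ, A m m = 1 := by
  intro m
  induction m with
  | zero => exact A_zero_zero
  | succ p ih =>
    have h1 := A_rec p p
    have h2 := A_eq_zero_of_gt (show p+1 < p+2 by omega)
    omega

theorem main' : ∀ n d k : ℕ, k + d = n → 1 ≤ k →
    (2*n - k) * A n k = k * Nat.choose (2*n - k) n := by
  intro n
  induction n using Nat.strong_induction_on with
  | _ n ihn =>
    intro d
    induction d with
    | zero =>
      intro k hk h1
      obtain rfl : k = n := by omega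
      rw [show 2*k - k = k from by omega, A_diag, Nat.choose_self]
    | succ d ihd =>
      intro k hkd h1
      obtain ⟨j, rfl⟩ : ∃ j, k = j + 1 := ⟨k - 1, by omega⟩
      obtain ⟨c, hc, hc1⟩ : ∃ c, n = j + c + 1 ∧ 1 ≤ c := ⟨d + 1, by omega, by omega⟩
      subst hc
      have hrec := A_rec (j + c) j
      have h2 := ihd (j + 2) (by omega) (by omega)
      have h3 : (2*(j+c) - j) * A (j+c) j = j * Nat.choose (2*(j+c) - j) (j+c) := by
        rcases Nat.eq_zero_or_pos j with hj | hj
        · subst hj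
          rw [A_zero (by omega)]
          simp
        · exact ihn (j+c) (by omega) c j (by omega) (by omega)
      rw [show 2*(j+c+1) - (j+1) = (j + 2*c) + 1 from by omega]
      rw [show 2*(j+c+1) - (j+2) = j + 2*c from by omega] at h2
      rw [show 2*(j+c) - j = j + 2*c from by omega] at h3
      rw [Nat.choose_succ_succ (j + 2*c) (j + c)]
      have h4 : Nat.choose (j+2*c) (j+c+1) * (j+c+1) = Nat.choose (j+2*c) (j+c) * c := by
        have h5 := Nat.choose_succ_right_eq (j + 2*c) (j + c)
        rw [show j + 2*c - (j + c) = c from by omega] at h5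
        exact h5
      apply Nat.eq_of_mul_eq_mul_left (show 0 < j + 2*c from by omega)
      have hrec' : (A (j+c+1) (j+1) : ℤ) = A (j+c) j + A (j+c+1) (j+2) := by
        exact_mod_cast hrec
      have h2' : ((j:ℤ)+2*c) * A (j+c+1) (j+2)
          = ((j:ℤ)+2) * Nat.choose (j+2*c) (j+c+1) := by exact_mod_cast h2
      have h3' : ((j:ℤ)+2*c) * A (j+c) j = (j:ℤ) * Nat.choose (j+2*c) (j+c) := by
        exact_mod_cast h3
      have h4' : (Nat.choose (j+2*c) (j+c+1) : ℤ) * ((j:ℤ)+c+1)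
          = (Nat.choose (j+2*c) (j+c) : ℤ) * c := by exact_mod_cast h4
      have goal' : ((j:ℤ)+2*c) * ((((j:ℤ) + 2*c) + 1) * A (j+c+1) (j+1))
          = ((j:ℤ)+2*c) * (((j:ℤ)+1) *
            ((Nat.choose (j+2*c) (j+c) : ℤ) + Nat.choose (j+2*c) (j+c+1))) := by
        linear_combination ((j:ℤ) + 2*c) * ((j:ℤ) + 2*c + 1) * hrec'
          + ((j:ℤ)+2*c+1) * h3' + ((j:ℤ)+2*c+1) * h2' + 2 * h4'
      exact_mod_cast goal'

end LP


/-- The number of link patterns of `n` strands with exposure number `k` is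
`binom(2n-k, n) · k / (2n-k)`, stated in the cross-multiplied form. -/
theorem card_linkPattern_exposure (n k : ℕ) (hn : 1 ≤ n) (hk1 : 1 ≤ k) (hkn : k ≤ n) :
    (2*n - k) *
      Nat.card {μ : Fin (2*n) → Fin (2*n) // IsLinkPattern n μ ∧ exposure n μ = k}
      = k * Nat.choose (2*n - k) n :=
  LP.main' n (n - k) k (by omega) hk1
end

section
/- For every n ≥ 1 and every k with 1 ≤ k ≤ n, the number of Dyck paths of semilength n whose last descent length equals k is binom(2n−k, n)·k/(2n−k); equivalently, (2n−k) times this number equals k·binom(2n−k, n). -/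
/-- A Dyck path of semilength `n`: a sequence of `2n` steps (`true` = ascent `+1`,
`false` = descent `-1`) with all partial sums nonnegative and total sum `0`. -/
def IsDyckPath (n : ℕ) (s : Fin (2*n) → Bool) : Prop :=
  (∀ j : Fin (2*n),
      (Finset.univ.filter (fun i => i ≤ j ∧ s i = false)).card
        ≤ (Finset.univ.filter (fun i => i ≤ j ∧ s i = true)).card) ∧
  (Finset.univ.filter (fun i => s i = true)).card = n

/-- The last descent length: the number of trailing descents of the path. -/
def lastDescent (n : ℕ) (s : Fin (2*n) → Bool) : ℕ :=
  (Finset.univ.filter (fun i : Fin (2*n) => ∀ j, i ≤ j → s j = false)).card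

namespace DyckAux

/-- `okB h l = true` iff the path `l` starting at height `h` stays nonnegative. -/
def okB : ℕ → List Bool → Bool
  | _, [] => true
  | h, true :: t => okB (h+1) t
  | 0, false :: _ => false
  | h+1, false :: t => okB h t

@[simp] lemma okB_nil (h : ℕ) : okB h [] = true := by cases h <;> rfl
@[simp] lemma okB_true (h : ℕ) (t : List Bool) : okB h (true :: t) = okB (h+1) t := by
  cases h <;> rfl
@[simp] lemma okB_false_zero (t : List Bool) : okB 0 (false :: t) = false := rfl
@[simp] lemma okB_false_succ (h : ℕ) (t : List Bool) : okB (h+1) (false :: t) = okB h t := rfl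

lemma okB_replicate_true (h a : ℕ) : okB h (List.replicate a true) = true := by
  induction a generalizing h with
  | zero => simp
  | succ a ih => simp [List.replicate_succ, ih]

lemma okB_replicate_false (h b : ℕ) (hb : b ≤ h) : okB h (List.replicate b false) = true := by
  induction b generalizing h with
  | zero => simp
  | succ b ih =>
    obtain ⟨h, rfl⟩ : ∃ h', h = h' + 1 := ⟨h - 1, by omega⟩
    simp [List.replicate_succ, ih h (by omega)]

/-- The set of nonnegative paths from height `h` with `a` up-steps and `b` down-steps. -/
def CSet (h a b : ℕ) : Set (List Bool) :=
  {l | l.count true = a ∧ l.count false = b ∧ okB h l = true}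

lemma bool_count_add_count (l : List Bool) : l.count true + l.count false = l.length := by
  induction l with
  | nil => rfl
  | cons x t ih => cases x <;> simp [List.count_cons] <;> omega

lemma CSet_finite (h a b : ℕ) : (CSet h a b).Finite := by
  apply (List.finite_length_eq Bool (a + b)).subset
  rintro l ⟨h1, h2, _⟩
  simp only [Set.mem_setOf_eq, ← bool_count_add_count l, h1, h2]

lemma CSet_right_zero (h a : ℕ) : CSet h a 0 = {List.replicate a true} := by
  ext l
  simp only [CSet, Set.mem_setOf_eq, Set.mem_singleton_iff]
  constructor
  · rintro ⟨h1, h2, _⟩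
    have hall : ∀ x ∈ l, x = true := by
      intro x hx
      cases x
      · exact absurd (List.count_pos_iff.2 hx) (by omega)
      · rfl
    have hlen : l.length = a := by
      have := bool_count_add_count l; omega
    rw [← hlen]
    exact List.eq_replicate_of_mem hall
  · rintro rfl
    simp [List.count_replicate, okB_replicate_true]

lemma CSet_left_zero (h b : ℕ) (hb : b ≤ h) : CSet h 0 b = {List.replicate b false} := by
  ext l
  simp only [CSet, Set.mem_setOf_eq, Set.mem_singleton_iff]
  constructor
  · rintro ⟨h1, h2, _⟩
    have hall : ∀ x ∈ l, x = false := by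
      intro x hx
      cases x
      · rfl
      · exact absurd (List.count_pos_iff.2 hx) (by omega)
    have hlen : l.length = b := by
      have := bool_count_add_count l; omega
    rw [← hlen]
    exact List.eq_replicate_of_mem hall
  · rintro rfl
    simp [List.count_replicate, okB_replicate_false h b hb]

lemma CSet_succ_succ (h a b : ℕ) :
    CSet (h+1) (a+1) (b+1) =
      (true :: ·) '' CSet (h+2) a (b+1) ∪ (false :: ·) '' CSet h (a+1) b := by
  ext l
  simp only [CSet, Set.mem_setOf_eq, Set.mem_union, Set.mem_image]
  constructor
  · rintro ⟨h1, h2, h3⟩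
    match l with
    | [] => simp at h1
    | true :: t =>
      left
      refine ⟨t, ⟨?_, ?_, by simpa using h3⟩, rfl⟩
      · simp [List.count_cons] at h1 ⊢; omega
      · simpa [List.count_cons] using h2
    | false :: t =>
      right
      refine ⟨t, ⟨by simpa [List.count_cons] using h1, ?_, by simpa using h3⟩, rfl⟩
      simp [List.count_cons] at h2 ⊢; omega
  · rintro (⟨t, ⟨h1, h2, h3⟩, rfl⟩ | ⟨t, ⟨h1, h2, h3⟩, rfl⟩) <;>
      simp [List.count_cons, h1, h2, h3]

lemma CSet_zero_succ_succ (a b : ℕ) :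
    CSet 0 (a+1) (b+1) = (true :: ·) '' CSet 1 a (b+1) := by
  ext l
  simp only [CSet, Set.mem_setOf_eq, Set.mem_image]
  constructor
  · rintro ⟨h1, h2, h3⟩
    match l with
    | [] => simp at h1
    | true :: t =>
      refine ⟨t, ⟨?_, by simpa [List.count_cons] using h2, by simpa using h3⟩, rfl⟩
      simp [List.count_cons] at h1 ⊢; omega
    | false :: t => simp at h3
  · rintro ⟨t, ⟨h1, h2, h3⟩, rfl⟩
    simp [List.count_cons, h1, h2, h3]

/-- The number of nonnegative paths. -/
noncomputable def N (h a b : ℕ) : ℕ := (CSet h a b).ncard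

lemma N_right_zero (h a : ℕ) : N h a 0 = 1 := by
  rw [N, CSet_right_zero]; simp

lemma N_left_zero (h b : ℕ) (hb : b ≤ h) : N h 0 b = 1 := by
  rw [N, CSet_left_zero h b hb]; simp

lemma N_zero_succ_succ (a b : ℕ) : N 0 (a+1) (b+1) = N 1 a (b+1) := by
  rw [N, N, CSet_zero_succ_succ, Set.ncard_image_of_injective _ (List.cons_injective)]

lemma N_succ_succ (h a b : ℕ) : N (h+1) (a+1) (b+1) = N (h+2) a (b+1) + N h (a+1) b := by
  have disj : Disjoint ((true :: ·) '' CSet (h+2) a (b+1)) ((false :: ·) '' CSet h (a+1) b) := by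
    rw [Set.disjoint_left]
    rintro _ ⟨t, _, rfl⟩ ⟨t', _, h'⟩
    simp at h'
  rw [N, CSet_succ_succ,
    Set.ncard_union_eq disj ((CSet_finite _ _ _).image _) ((CSet_finite _ _ _).image _),
    Set.ncard_image_of_injective _ List.cons_injective,
    Set.ncard_image_of_injective _ List.cons_injective]
  rfl

lemma count_formula : ∀ (m a b h : ℕ), a + b ≤ m → b ≤ a + h →
    N h a b + (a+b).choose (a+h+1) = (a+b).choose b := by
  intro m
  induction m with
  | zero =>
    intro a b h h1 h2
    obtain ⟨rfl, rfl⟩ : a = 0 ∧ b = 0 := by omega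
    simp [N_right_zero]
  | succ m ih =>
    intro a b h h1 h2
    match a, b with
    | a, 0 => simp [N_right_zero, Nat.choose_eq_zero_of_lt (by omega : a < a + h + 1)]
    | 0, b+1 =>
      rw [N_left_zero h (b+1) (by omega)]
      simp [Nat.choose_eq_zero_of_lt (show b+1 < h+1 by omega), Nat.choose_self]
    | a+1, b+1 =>
      have pascal : ∀ x y : ℕ, (x+1).choose (y+1) = x.choose y + x.choose (y+1) :=
        fun x y => Nat.choose_succ_succ x y
      match h with
      | 0 =>
        rw [N_zero_succ_succ]
        have IH := ih a (b+1) 1 (by omega) (by omega)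
        -- IH : N 1 a (b+1) + (a+(b+1)).choose (a+1+1) = (a+(b+1)).choose (b+1)
        have hsymm : (a + (b+1)).choose (a+1) = (a + (b+1)).choose b := by
          have := Nat.choose_symm (n := a + (b+1)) (k := a+1) (by omega)
          rw [show a + (b+1) - (a+1) = b by omega] at this
          omega
        have e1 : a + 1 + (b + 1) = (a + (b+1)) + 1 := by omega
        have e2 : a + 1 + 0 + 1 = (a+1) + 1 := by omega
        rw [e1, e2, pascal, pascal]
        have e3 : a + 1 + 1 = (a+1) +1 := by omega
        rw [e3] at IH
        omega
      | h+1 =>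
        rw [N_succ_succ]
        have IH1 := ih a (b+1) (h+2) (by omega) (by omega)
        -- N (h+2) a (b+1) + (a+(b+1)).choose (a+(h+2)+1) = (a+(b+1)).choose (b+1)
        have IH2 := ih (a+1) b h (by omega) (by omega)
        -- N h (a+1) b + (a+1+b).choose (a+1+h+1) = (a+1+b).choose b
        have e1 : a + 1 + (b + 1) = (a + (b+1)) + 1 := by omega
        have e2 : a + 1 + (h + 1) + 1 = (a + (h+2)) + 1 := by omega
        rw [e1, e2, pascal, pascal]
        rw [show a + (h+2) + 1 = (a + (h+2)) + 1 by omega] at IH1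
        rw [show a + 1 + b = a + (b+1) by omega, show a + 1 + h + 1 = a + (h +2) by omega] at IH2
        omega


lemma okB_iff (h : ℕ) (l : List Bool) :
    okB h l = true ↔ ∀ t, (l.take t).count false ≤ (l.take t).count true + h := by
  induction l generalizing h with
  | nil => simp
  | cons x l ih =>
    cases x
    · match h with
      | 0 =>
        simp only [okB_false_zero, Bool.false_eq_true, false_iff, not_forall, not_le]
        exact ⟨1, by simp⟩
      | h+1 =>
        rw [okB_false_succ, ih h]
        constructor
        · intro H t
          match t with
          | 0 => simp
          | t+1 =>
            have := H t
            simp only [List.take_succ_cons, List.count_cons]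
            simp only [beq_iff_eq, if_true, if_false, Bool.true_eq_false, Bool.false_eq_true]
            omega
        · intro H t
          have := H (t+1)
          simp only [List.take_succ_cons, List.count_cons, beq_iff_eq, if_true, if_false,
            Bool.true_eq_false, Bool.false_eq_true] at this
          omega
    · rw [okB_true, ih (h+1)]
      constructor
      · intro H t
        match t with
        | 0 => simp
        | t+1 =>
          have := H t
          simp only [List.take_succ_cons, List.count_cons, beq_iff_eq, if_true, if_false,
            Bool.true_eq_false, Bool.false_eq_true]
          omega
      · intro H t
        have := H (t+1)
        simp only [List.take_succ_cons, List.count_cons, beq_iff_eq, if_true, if_false,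
          Bool.true_eq_false, Bool.false_eq_true] at this
        omega

lemma count_ofFn {m : ℕ} (s : Fin m → Bool) (c : Bool) :
    (List.ofFn s).count c = (Finset.univ.filter fun i => s i = c).card := by
  induction m with
  | zero => simp
  | succ m ih =>
    have key : (Finset.univ.filter fun i : Fin (m+1) => s i = c).card
        = ((if s 0 = c then 1 else 0) + (Finset.univ.filter fun i : Fin m => s i.succ = c).card) := by
      rw [Finset.card_filter, Fin.sum_univ_succ, ← Finset.card_filter]
    rw [key, List.ofFn_succ, List.count_cons, ih (fun i => s i.succ)]
    cases hc : s 0 <;> cases c <;> simp [hc] <;> omega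

lemma count_take_ofFn {m : ℕ} (s : Fin m → Bool) (c : Bool) (t : ℕ) (ht : t ≤ m) :
    ((List.ofFn s).take t).count c
      = (Finset.univ.filter fun i : Fin m => i.val < t ∧ s i = c).card := by
  rw [← Fin.ofFn_take_eq_take_ofFn ht s, count_ofFn]
  refine Finset.card_bij' (fun i _ => Fin.castLE ht i)
    (fun b hb => ⟨b.val, (Finset.mem_filter.1 hb).2.1⟩) ?_ ?_ ?_ ?_
  · intro i hi
    simp only [Finset.mem_filter, Finset.mem_univ, true_and] at hi ⊢
    exact ⟨i.2, hi⟩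
  · intro b hb
    simp only [Finset.mem_filter, Finset.mem_univ, true_and] at hb ⊢
    exact hb.2
  · intro i _; rfl
  · intro b _; rfl

lemma filter_le_count {m : ℕ} (s : Fin m → Bool) (j : Fin m) (c : Bool) :
    (Finset.univ.filter fun i => i ≤ j ∧ s i = c).card
      = ((List.ofFn s).take (j.val+1)).count c := by
  rw [count_take_ofFn s c (j.val+1) (by omega)]
  congr 1
  apply Finset.filter_congr
  intro i _
  have : i ≤ j ↔ i.val < j.val + 1 := by rw [Fin.le_def]; omega
  rw [this]

lemma lastDescent_eq_iff {m k : ℕ} (s : Fin m → Bool) (hk : 1 ≤ k) (hkm : k < m) :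
    (Finset.univ.filter (fun i : Fin m => ∀ j, i ≤ j → s j = false)).card = k ↔
      ((∀ j : Fin m, m - k ≤ j.val → s j = false) ∧ s ⟨m - k - 1, by omega⟩ = true) := by
  set S := Finset.univ.filter (fun i : Fin m => ∀ j, i ≤ j → s j = false) with hS
  have hmemS : ∀ i : Fin m, i ∈ S ↔ ∀ j, i ≤ j → s j = false := by
    intro i; simp [hS]
  constructor
  · intro hcard
    have hne : S.Nonempty := Finset.card_pos.1 (by omega)
    set i₀ := S.min' hne with hi₀
    have hmem : ∀ j, i₀ ≤ j → s j = false := (hmemS i₀).1 (S.min'_mem hne)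
    have hSI : S = Finset.Ici i₀ := by
      ext i
      rw [Finset.mem_Ici, hmemS]
      constructor
      · intro hi; exact S.min'_le i ((hmemS i).2 hi)
      · intro hi j hj; exact hmem j (le_trans hi hj)
    have hcard2 : S.card = m - i₀.val := by rw [hSI, Fin.card_Ici]
    have hival : i₀.val = m - k := by omega
    constructor
    · intro j hj
      exact hmem j (by rw [Fin.le_def, hival]; omega)
    · by_contra hne'
      have hfalse : s ⟨m - k - 1, by omega⟩ = false := by
        cases hval : s ⟨m - k - 1, by omega⟩
        · rfl
        · exact absurd hval hne'
      have hmem2 : (⟨m - k - 1, by omega⟩ : Fin m) ∈ S := by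
        rw [hmemS]
        intro j hj
        rcases Nat.eq_or_lt_of_le (Fin.le_def.1 hj) with heq | hlt
        · have : j = ⟨m - k - 1, by omega⟩ := Fin.ext heq.symm
          rw [this]; exact hfalse
        · exact hmem j (by rw [Fin.le_def, hival]; simp at hlt ⊢; omega)
      have h4 : i₀ ≤ ⟨m - k - 1, by omega⟩ := S.min'_le _ hmem2
      have h5 := Fin.le_def.1 h4
      simp only [Fin.val_mk] at h5
      omega
  · rintro ⟨h1, h2⟩
    have hSI : S = Finset.Ici (⟨m - k, by omega⟩ : Fin m) := by
      ext i
      rw [Finset.mem_Ici, hmemS]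
      constructor
      · intro hi
        by_contra hlt
        rw [Fin.le_def, not_le] at hlt
        simp only [Fin.val_mk] at hlt
        have := hi ⟨m - k - 1, by omega⟩ (by rw [Fin.le_def]; simp; omega)
        rw [h2] at this
        simp at this
      · intro hi j hj
        apply h1 j
        have := le_trans (Fin.le_def.1 hi) (Fin.le_def.1 hj)
        simp at this
        omega
    rw [hSI, Fin.card_Ici]
    simp
    omega


end DyckAux
namespace DyckAux

lemma fwd {n k : ℕ} (hn : 1 ≤ n) (hk1 : 1 ≤ k) (hkn : k ≤ n) (s : Fin (2*n) → Bool)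
    (hD1 : ∀ j : Fin (2*n),
      (Finset.univ.filter (fun i => i ≤ j ∧ s i = false)).card
        ≤ (Finset.univ.filter (fun i => i ≤ j ∧ s i = true)).card)
    (hD2 : (Finset.univ.filter (fun i => s i = true)).card = n)
    (hlast : (Finset.univ.filter (fun i : Fin (2*n) => ∀ j, i ≤ j → s j = false)).card = k) :
    (List.ofFn s).take (2*n-k-1) ∈ CSet 0 (n-1) (n-k) ∧
      (List.ofFn s).take (2*n-k-1) ++ true :: List.replicate k false = List.ofFn s := by
  have hklt : k < 2*n := by omega
  have hcount : (List.ofFn s).count true = n := by rw [count_ofFn]; exact hD2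
  have hlen : (List.ofFn s).length = 2*n := by simp
  have hcountf : (List.ofFn s).count false = n := by
    have := bool_count_add_count (List.ofFn s); omega
  rw [lastDescent_eq_iff s hk1 hklt] at hlast
  obtain ⟨htail, hpeak⟩ := hlast
  have hdrop : (List.ofFn s).drop (2*n - k - 1) = true :: List.replicate k false := by
    apply List.ext_getElem
    · simp; omega
    · intro i h1 h2
      rw [List.getElem_drop, List.getElem_ofFn]
      simp only [List.length_drop, hlen] at h1
      match i with
      | 0 => simpa using hpeak
      | i+1 =>
        rw [List.getElem_cons_succ, List.getElem_replicate]
        apply htail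
        simp; omega
  have hsplit : (List.ofFn s).take (2*n-k-1) ++ true :: List.replicate k false = List.ofFn s := by
    conv_rhs => rw [← List.take_append_drop (2*n-k-1) (List.ofFn s)]
    rw [hdrop]
  set l := (List.ofFn s).take (2*n-k-1) with hl
  have hlenl : l.length = 2*n-k-1 := by
    rw [hl, List.length_take, hlen]; omega
  have hct : l.count true = n - 1 := by
    have := congrArg (List.count true) hsplit
    simp only [List.count_append, List.count_cons, List.count_replicate] at this
    simp at this
    omega
  have hcf : l.count false = n - k := by
    have := congrArg (List.count false) hsplit
    simp only [List.count_append, List.count_cons, List.count_replicate] at this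
    simp at this
    omega
  refine ⟨⟨hct, hcf, ?_⟩, hsplit⟩
  rw [okB_iff]
  intro t
  by_cases ht : t ≤ l.length
  · have htake : l.take t = (List.ofFn s).take t := by
      rw [hl, List.take_take]
      congr 1
      omega
    match t with
    | 0 => simp
    | u+1 =>
      have hu : u < 2*n := by omega
      have hcond := hD1 ⟨u, hu⟩
      rw [filter_le_count, filter_le_count] at hcond
      rw [htake]
      simpa using hcond
  · rw [List.take_of_length_le (by omega)]
    omega
  
lemma bwd {n k : ℕ} (hn : 1 ≤ n) (hk1 : 1 ≤ k) (hkn : k ≤ n) (l : List Bool)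
    (hl : l ∈ CSet 0 (n-1) (n-k)) :
    List.ofFn (fun i : Fin (2*n) => (l ++ true :: List.replicate k false).getD i.val false)
        = l ++ true :: List.replicate k false ∧
      IsDyckPath n (fun i : Fin (2*n) => (l ++ true :: List.replicate k false).getD i.val false) ∧
      lastDescent n (fun i : Fin (2*n) => (l ++ true :: List.replicate k false).getD i.val false)
        = k := by
  obtain ⟨hct, hcf, hok⟩ := hl
  have hklt : k < 2*n := by omega
  have hlenl : l.length = 2*n-k-1 := by
    have := bool_count_add_count l; omega
  set L := l ++ true :: List.replicate k false with hL
  have hlenL : L.length = 2*n := by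
    rw [hL]; simp [hlenl]; omega
  set s : Fin (2*n) → Bool := fun i => L.getD i.val false with hs
  have hofn : List.ofFn s = L := by
    apply List.ext_getElem (by simp [hlenL])
    intro i h1 h2
    rw [List.getElem_ofFn]
    exact List.getD_eq_getElem L false (by omega)
  have hcountL : L.count true = n := by
    rw [hL]
    simp [List.count_append, List.count_cons, List.count_replicate, hct]
    omega
  refine ⟨hofn, ⟨?_, ?_⟩, ?_⟩
  · -- partial sums
    intro j
    rw [filter_le_count, filter_le_count, hofn]
    set t := j.val + 1 with htdef
    by_cases ht : t ≤ l.length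
    · rw [hL, List.take_append_of_le_length ht]
      have := (okB_iff 0 l).1 hok t
      simpa using this
    · rw [hL, List.take_append, List.take_of_length_le (by omega)]
      obtain ⟨r, hr⟩ : ∃ r, t - l.length = r + 1 := ⟨t - l.length - 1, by omega⟩
      rw [hr, List.take_succ_cons, List.take_replicate]
      simp only [List.count_append, List.count_cons, List.count_replicate]
      have h1 := (okB_iff 0 l).1 hok l.length
      rw [List.take_of_length_le le_rfl] at h1
      simp
      omega
  · -- total count
    rw [← count_ofFn, hofn, hcountL]
  · -- last descent
    rw [lastDescent, lastDescent_eq_iff s hk1 hklt]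
    constructor
    · intro j hj
      show L.getD j.val false = false
      rw [List.getD_eq_getElem L false (by omega)]
      rw [List.getElem_append_right (by omega : l.length ≤ j.val)]
      obtain ⟨r, hr⟩ : ∃ r, j.val - l.length = r + 1 := ⟨j.val - l.length - 1, by omega⟩
      have hrk : r < k := by omega
      simp only [hr, List.getElem_cons_succ]
      rw [List.getElem_replicate]
    · show L.getD _ false = true
      simp only [Fin.val_mk]
      rw [← hlenl, List.getD_eq_getElem L false (by omega),
        List.getElem_append_right (le_refl l.length)]
      simp

end DyckAux


/-- The number of Dyck paths of semilength `n` with last descent length `k` is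
`binom(2n-k, n) · k / (2n-k)`, stated in the cross-multiplied form. -/
theorem card_dyckPath_lastDescent (n k : ℕ) (hn : 1 ≤ n) (hk1 : 1 ≤ k) (hkn : k ≤ n) :
    (2*n - k) *
      Nat.card {s : Fin (2*n) → Bool // IsDyckPath n s ∧ lastDescent n s = k}
      = k * Nat.choose (2*n - k) n := by
  classical
  have hcard : Nat.card {s : Fin (2*n) → Bool // IsDyckPath n s ∧ lastDescent n s = k}
      = DyckAux.N 0 (n-1) (n-k) := by
    rw [DyckAux.N, ← Nat.card_coe_set_eq]
    apply Nat.card_congr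
    refine
      { toFun := fun x => ⟨(List.ofFn x.1).take (2*n-k-1),
          (DyckAux.fwd hn hk1 hkn x.1 x.2.1.1 x.2.1.2 x.2.2).1⟩
        invFun := fun y => ⟨fun i => (y.1 ++ true :: List.replicate k false).getD i.val false,
          (DyckAux.bwd hn hk1 hkn y.1 y.2).2⟩
        left_inv := ?_
        right_inv := ?_ }
    · rintro ⟨s, hs⟩
      have hsplit := (DyckAux.fwd hn hk1 hkn s hs.1.1 hs.1.2 hs.2).2
      apply Subtype.ext
      funext i
      show ((List.ofFn s).take (2*n-k-1) ++ true :: List.replicate k false).getD i.val false = s i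
      rw [hsplit, List.getD_eq_getElem _ false (by simp), List.getElem_ofFn]
    · rintro ⟨l, hl⟩
      have hofn := (DyckAux.bwd hn hk1 hkn l hl).1
      apply Subtype.ext
      show (List.ofFn _).take (2*n-k-1) = l
      rw [hofn]
      obtain ⟨hct, hcf, _⟩ := hl
      have hlen2 := DyckAux.bool_count_add_count l
      refine List.take_left' ?_
      omega
  rw [hcard]
  -- now pure arithmetic with binomials
  set M := (n-1) + (n-k) with hM
  have key := DyckAux.count_formula M (n-1) (n-k) 0 le_rfl (by omega)
  rw [show (n-1) + 0 + 1 = n by omega] at key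
  rw [← hM] at key
  -- key : N 0 (n-1) (n-k) + M.choose n = M.choose (n-k)
  have hsymm : M.choose (n-k) = M.choose (n-1) := by
    have := Nat.choose_symm (n := M) (k := n-k) (by omega)
    rw [show M - (n-k) = n-1 by omega] at this
    exact this.symm
  set N0 := DyckAux.N 0 (n-1) (n-k) with hN0
  have e1 : (M+1) * M.choose (n-1) = (M+1).choose n * n := by
    have := Nat.add_one_mul_choose_eq M (n-1)
    rw [show n - 1 + 1 = n by omega] at this
    simpa using this
  have e2 : (M+1) * M.choose n = (M+1).choose n * (n-k) := by
    have h3 := Nat.add_one_mul_choose_eq M n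
    have h4 := Nat.choose_succ_right_eq (M+1) n
    rw [show M + 1 - n = n - k by omega] at h4
    omega
  have hmul : (M+1) * (N0 + M.choose n) = (M+1) * M.choose (n-1) := by
    rw [key, hsymm]
  rw [Nat.mul_add, e1, e2] at hmul
  rw [show 2*n - k = M + 1 by omega]
  have hnsplit : (M+1).choose n * n = (M+1).choose n * (n-k) + (M+1).choose n * k := by
    rw [← Nat.mul_add]
    congr 1
    omega
  have h10 : (M+1) * N0 = (M+1).choose n * k := by
    apply Nat.add_right_cancel (m := (M+1).choose n * (n-k))
    rw [hmul, hnsplit]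
    ring
  rw [h10, Nat.mul_comm]
end

section
/- For every n ≥ 2 and every link pattern π′ of n strands that pairs 2n−2 with 2n−1, the number of link patterns μ of n strands with e(μ) = π′ equals the exposure number of π′. (Equivalently, if π′ is obtained by inserting a strand at the end of a link pattern π of n−1 strands with exposure number k, then the preimage of π′ under e consists of exactly k + 1 distinct link patterns.) -/
/-- The Temperley–Lieb generator `e` (acting at the sites `2n-2`, `2n-1`):
`e(μ) = μ` if `μ (2n-2) = 2n-1`; otherwise `e(μ)` pairs `2n-2` with `2n-1`,
pairs `μ (2n-2)` with `μ (2n-1)`, and agrees with `μ` elsewhere. -/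
def eFun (n : ℕ) (μ : Fin (2*n) → Fin (2*n)) : Fin (2*n) → Fin (2*n) := fun i =>
  if h : 1 ≤ n then
    let a : Fin (2*n) := ⟨2*n - 2, by omega⟩
    let b : Fin (2*n) := ⟨2*n - 1, by omega⟩
    if μ a = b then μ i
    else if i = a then b
    else if i = b then a
    else if i = μ a then μ b
    else if i = μ b then μ a
    else μ i
  else μ i

set_option maxHeartbeats 1000000 in
/-- For `n ≥ 2` and a link pattern `π'` of `n` strands pairing `2n-2` with `2n-1`,
the number of link patterns `μ` with `e(μ) = π'` equals the exposure number of `π'`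
(which is `k + 1` if `π'` arises from a pattern of `n-1` strands of exposure `k`). -/
theorem card_eFun_fiber (n : ℕ) (hn : 2 ≤ n) (π' : Fin (2*n) → Fin (2*n))
    (hπ' : IsLinkPattern n π')
    (hpair : π' ⟨2*n - 2, by omega⟩ = (⟨2*n - 1, by omega⟩ : Fin (2*n))) :
    Nat.card {μ : Fin (2*n) → Fin (2*n) // IsLinkPattern n μ ∧ eFun n μ = π'}
      = exposure n π' := by
  obtain ⟨hinv, hfix, hnc⟩ := hπ'
  have hn1 : 1 ≤ n := by omega
  set a : Fin (2*n) := ⟨2*n - 2, by omega⟩ with haa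
  set b : Fin (2*n) := ⟨2*n - 1, by omega⟩ with hbb
  have hav : a.val = 2*n - 2 := rfl
  have hbv : b.val = 2*n - 1 := rfl
  have hab : π' a = b := hpair
  have hba : π' b = a := by have h := hinv a; rw [hab] at h; exact h
  have hinj : Function.Injective π' := by
    intro x y h
    have hx := hinv x
    rw [h, hinv y] at hx
    exact hx.symm
  have halb : a < b := by rw [Fin.lt_def, hav, hbv]; omega
  have hanb : a ≠ b := ne_of_lt halb
  have bmax : ∀ x : Fin (2*n), ¬ b < x := by
    intro x hx
    rw [Fin.lt_def, hbv] at hx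
    have h2 := x.isLt
    omega
  have hltb : ∀ x : Fin (2*n), x ≠ b → x < b := by
    intro x h
    rw [Fin.lt_def, hbv]
    have h2 := x.isLt
    have h3 : x.val ≠ 2*n-1 := fun hh => h (Fin.ext (by rw [hbv]; exact hh))
    omega
  have hlta : ∀ x : Fin (2*n), x ≠ a → x ≠ b → x < a := by
    intro x h1 h2
    rw [Fin.lt_def, hav]
    have h3 := x.isLt
    have h4 : x.val ≠ 2*n-2 := fun hh => h1 (Fin.ext (by rw [hav]; exact hh))
    have h5 : x.val ≠ 2*n-1 := fun hh => h2 (Fin.ext (by rw [hbv]; exact hh))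
    omega
  have heF : ∀ (μ : Fin (2*n) → Fin (2*n)) (i : Fin (2*n)),
      eFun n μ i = if μ a = b then μ i
        else if i = a then b else if i = b then a
        else if i = μ a then μ b else if i = μ b then μ a else μ i := by
    intro μ i
    simp only [eFun, dif_pos hn1]
    rfl
  -- characterization of fibers
  have keyeq : ∀ μ : Fin (2*n) → Fin (2*n), eFun n μ = π' → μ a = b → μ = π' := by
    intro μ he h
    funext i
    have h2 := congrFun he i
    rw [heF, if_pos h] at h2
    exact h2
  have key : ∀ μ : Fin (2*n) → Fin (2*n), IsLinkPattern n μ → eFun n μ = π' → μ a ≠ b →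
      μ b ≠ a ∧ π' (μ a) = μ b ∧ π' (μ b) = μ a ∧
      (∀ i, i ≠ a → i ≠ b → i ≠ μ a → i ≠ μ b → μ i = π' i) := by
    intro μ hμ he h
    obtain ⟨minv, mfix, mnc⟩ := hμ
    have hba' : μ b ≠ a := by
      intro hh
      apply h
      rw [← hh, minv]
    have h1 : π' (μ a) = μ b := by
      have h2 := congrFun he (μ a)
      rw [heF, if_neg h, if_neg (mfix a), if_neg h, if_pos rfl] at h2
      exact h2.symm
    have h25 : π' (μ b) = μ a := by
      have h3 := hinv (μ a); rw [h1] at h3; exact h3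
    refine ⟨hba', h1, h25, ?_⟩
    intro i hia hib hiμa hiμb
    have h2 := congrFun he i
    rw [heF, if_neg h, if_neg hia, if_neg hib, if_neg hiμa, if_neg hiμb] at h2
    exact h2
  have key2 : ∀ μ : Fin (2*n) → Fin (2*n), IsLinkPattern n μ → eFun n μ = π' → μ a ≠ b →
      μ b < μ a ∧ (∀ x y : Fin (2*n), x < μ b → μ a < y → π' x ≠ y) := by
    intro μ hμ he h
    obtain ⟨hba', h1, h25, helse⟩ := key μ hμ he h
    obtain ⟨minv, mfix, mnc⟩ := hμ
    have hca : μ b < a := hlta _ hba' (mfix b)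
    have hda : μ a < a := hlta _ (mfix a) h
    have hcd : μ b ≠ μ a := by
      intro hh
      have h2 := congrArg μ hh
      rw [minv, minv] at h2
      exact hanb h2.symm
    have hclt : μ b < μ a := by
      rcases lt_trichotomy (μ b) (μ a) with h' | h' | h'
      · exact h'
      · exact absurd h' hcd
      · exact absurd (mnc (μ a) (μ b) a b h' hca halb (minv a) (minv b)) not_false
    refine ⟨hclt, ?_⟩
    intro x y hx hy hxy
    have hxa : x ≠ a := ne_of_lt (lt_trans hx hca)
    have hxb : x ≠ b := ne_of_lt (lt_trans (lt_trans hx hca) halb)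
    have hxμa : x ≠ μ a := ne_of_lt (lt_trans hx hclt)
    have hxμb : x ≠ μ b := ne_of_lt hx
    have hμx : μ x = y := by rw [helse x hxa hxb hxμa hxμb]; exact hxy
    have hyb : y ≠ b := by
      intro hh
      apply hxa
      apply hinj
      rw [hxy, hh, hab]
    have hylb : y < b := hltb y hyb
    exact mnc x (μ b) y b hx (lt_trans hclt hy) hylb hμx (minv b)
  -- membership of the map's image
  have Fmem : ∀ μ : Fin (2*n) → Fin (2*n), IsLinkPattern n μ → eFun n μ = π' →
      μ b < π' (μ b) ∧ π' (μ b) = π' (μ b) ∧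
        ∀ c d : Fin (2*n), c < μ b → π' (μ b) < d → π' c ≠ d := by
    intro μ hμ he
    by_cases h : μ a = b
    · have hm := keyeq μ he h
      rw [hm, hba, hab]
      exact ⟨halb, rfl, fun c d _ hd _ => bmax d hd⟩
    · obtain ⟨hclt, hout2⟩ := key2 μ hμ he h
      obtain ⟨hba', h1, h25, helse⟩ := key μ hμ he h
      rw [h25]
      exact ⟨hclt, rfl, hout2⟩
  show Nat.card {μ : Fin (2*n) → Fin (2*n) // IsLinkPattern n μ ∧ eFun n μ = π'}
      = Nat.card {p : Fin (2*n) × Fin (2*n) //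
          p.1 < p.2 ∧ π' p.1 = p.2 ∧ ∀ c d : Fin (2*n), c < p.1 → p.2 < d → π' c ≠ d}
  refine Nat.card_eq_of_bijective
    (fun m => ⟨(m.1 b, π' (m.1 b)), Fmem m.1 m.2.1 m.2.2⟩) ⟨?_, ?_⟩
  · -- injectivity
    rintro ⟨μ1, h1, e1⟩ ⟨μ2, h2, e2⟩ hfe
    have hb12 : μ1 b = μ2 b := congrArg (fun s => s.1.1) hfe
    apply Subtype.ext
    show μ1 = μ2
    by_cases k1 : μ1 a = b <;> by_cases k2 : μ2 a = b
    · rw [keyeq μ1 e1 k1, keyeq μ2 e2 k2]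
    · exfalso
      obtain ⟨h2a, -, -, -⟩ := key μ2 h2 e2 k2
      apply h2a
      rw [← hb12, keyeq μ1 e1 k1, hba]
    · exfalso
      obtain ⟨h1a, -, -, -⟩ := key μ1 h1 e1 k1
      apply h1a
      rw [hb12, keyeq μ2 e2 k2, hba]
    · obtain ⟨h1a, h1p, h1q, h1o⟩ := key μ1 h1 e1 k1
      obtain ⟨h2a, h2p, h2q, h2o⟩ := key μ2 h2 e2 k2
      obtain ⟨m1inv, m1fix, -⟩ := h1
      obtain ⟨m2inv, m2fix, -⟩ := h2
      have hAA : μ1 a = μ2 a := by rw [← h1q, ← h2q, hb12]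
      funext i
      by_cases hib : i = b
      · rw [hib, hb12]
      by_cases hia : i = a
      · rw [hia, hAA]
      by_cases hiμb : i = μ1 b
      · subst hiμb
        rw [m1inv, hb12, m2inv]
      by_cases hiμa : i = μ1 a
      · subst hiμa
        rw [m1inv, hAA, m2inv]
      · rw [h1o i hia hib hiμa hiμb,
          h2o i hia hib (by rw [← hAA]; exact hiμa) (by rw [← hb12]; exact hiμb)]
  · -- surjectivity
    rintro ⟨⟨p, q⟩, hpq, hlink, hout⟩
    dsimp only at hpq hlink hout
    by_cases hqb : q = b
    · have hpa : p = a := by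
        apply hinj
        rw [hlink, hqb, hab]
      have hEπ : eFun n π' = π' := by
        funext i
        rw [heF, if_pos hab]
      refine ⟨⟨π', ⟨hinv, hfix, hnc⟩, hEπ⟩, ?_⟩
      apply Subtype.ext
      show (π' b, π' (π' b)) = (p, q)
      rw [hba, hab, hpa, hqb]
    · have hqπ : π' q = p := by have h := hinv p; rw [hlink] at h; exact h
      have hqa : q ≠ a := by
        intro hh
        have hb' : p = b := by apply hinj; rw [hlink, hh, hba]
        rw [hb', hh] at hpq
        exact bmax a hpq
      have hpb : p ≠ b := fun hh => bmax q (hh ▸ hpq)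
      have hpa : p ≠ a := fun hh => hqb (by rw [← hlink, hh, hab])
      have hqlt : q < a := hlta q hqa hqb
      have hplt : p < a := lt_trans hpq hqlt
      have hpqne : p ≠ q := ne_of_lt hpq
      obtain ⟨μ, hμdef⟩ : ∃ μ : Fin (2*n) → Fin (2*n), μ = fun i =>
          if i = p then b else if i = q then a else if i = a then q
          else if i = b then p else π' i := ⟨_, rfl⟩
      have hμp : μ p = b := by rw [hμdef]; simp
      have hμq : μ q = a := by rw [hμdef]; simp [Ne.symm hpqne]
      have hμa : μ a = q := by rw [hμdef]; simp [Ne.symm hpa, Ne.symm hqa]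
      have hμb : μ b = p := by
        rw [hμdef]; simp [Ne.symm hpb, Ne.symm hqb, Ne.symm hanb]
      have hμo : ∀ i, i ≠ p → i ≠ q → i ≠ a → i ≠ b → μ i = π' i := by
        intro i i1 i2 i3 i4
        rw [hμdef]; simp [i1, i2, i3, i4]
      have hlinks : ∀ u v : Fin (2*n), u < v → μ u = v →
          (u = q ∧ v = a) ∨ (u = p ∧ v = b) ∨
          (u ≠ p ∧ u ≠ q ∧ u ≠ a ∧ u ≠ b ∧ v ≠ p ∧ v ≠ q ∧ v ≠ a ∧ v ≠ b ∧ π' u = v) := by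
        intro u v huv hμuv
        by_cases h1 : u = p
        · subst h1; rw [hμp] at hμuv; exact Or.inr (Or.inl ⟨rfl, hμuv.symm⟩)
        by_cases h2 : u = q
        · subst h2; rw [hμq] at hμuv; exact Or.inl ⟨rfl, hμuv.symm⟩
        by_cases h3 : u = a
        · exfalso
          subst h3
          rw [hμa] at hμuv
          rw [← hμuv] at huv
          exact lt_asymm hqlt huv
        by_cases h4 : u = b
        · exfalso
          subst h4
          exact bmax v huv
        · have hπu : π' u = v := by rw [← hμo u h1 h2 h3 h4]; exact hμuv
          have hπv : π' v = u := by have h5 := hinv u; rw [hπu] at h5; exact h5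
          refine Or.inr (Or.inr ⟨h1, h2, h3, h4, ?_, ?_, ?_, ?_, hπu⟩)
          · intro hh; apply h2; rw [← hπv, hh, hlink]
          · intro hh; apply h1; rw [← hπv, hh, hqπ]
          · intro hh; apply h4; rw [← hπv, hh, hab]
          · intro hh; apply h3; rw [← hπv, hh, hba]
      have hμinv : ∀ i, μ (μ i) = i := by
        intro i
        by_cases h1 : i = p
        · rw [h1, hμp, hμb]
        by_cases h2 : i = q
        · rw [h2, hμq, hμa]
        by_cases h3 : i = a
        · rw [h3, hμa, hμq]
        by_cases h4 : i = b
        · rw [h4, hμb, hμp]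
        · have h5 : μ i = π' i := hμo i h1 h2 h3 h4
          have g1 : π' i ≠ p := fun hh => h2 (by rw [← hinv i, hh, hlink])
          have g2 : π' i ≠ q := fun hh => h1 (by rw [← hinv i, hh, hqπ])
          have g3 : π' i ≠ a := fun hh => h4 (by rw [← hinv i, hh, hab])
          have g4 : π' i ≠ b := fun hh => h3 (by rw [← hinv i, hh, hba])
          rw [h5, hμo _ g1 g2 g3 g4, hinv]
      have hμfix : ∀ i, μ i ≠ i := by
        intro i
        by_cases h1 : i = p
        · rw [h1, hμp]; exact Ne.symm hpb
        by_cases h2 : i = q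
        · rw [h2, hμq]; exact Ne.symm hqa
        by_cases h3 : i = a
        · rw [h3, hμa]; exact hqa
        by_cases h4 : i = b
        · rw [h4, hμb]; exact hpb
        · rw [hμo i h1 h2 h3 h4]; exact hfix i
      have hμnc : ∀ x y z w : Fin (2*n), x < y → y < z → z < w →
          μ x = z → μ y = w → False := by
        intro x y z w h1 h2 h3 hxz hyw
        rcases hlinks x z (lt_trans h1 h2) hxz with ⟨hx, hz⟩ | ⟨hx, hz⟩ |
          ⟨hx1, hx2, hx3, hx4, hz1, hz2, hz3, hz4, hπx⟩
        · -- x = q, z = a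
          rcases hlinks y w (lt_trans h2 h3) hyw with ⟨hy, hw⟩ | ⟨hy, hw⟩ |
            ⟨hy1, hy2, hy3, hy4, hw1, hw2, hw3, hw4, hπy⟩
          · rw [hx, hy] at h1
            exact lt_irrefl q h1
          · rw [hx, hy] at h1
            exact lt_asymm hpq h1
          · have h5 := hltb w hw4
            rw [hz] at h3
            rw [Fin.lt_def, hav] at h3
            rw [Fin.lt_def, hbv] at h5
            omega
        · -- x = p, z = b
          rw [hz] at h3
          exact bmax w h3
        · rcases hlinks y w (lt_trans h2 h3) hyw with ⟨hy, hw⟩ | ⟨hy, hw⟩ |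
            ⟨hy1, hy2, hy3, hy4, hw1, hw2, hw3, hw4, hπy⟩
          · -- y = q, w = a
            rw [hy] at h1 h2
            rcases lt_trichotomy x p with h' | h' | h'
            · exact hout x z h' h2 hπx
            · exact hx1 h'
            · exact hnc p x q z h' h1 h2 hlink hπx
          · -- y = p, w = b
            rw [hy] at h1 h2
            rcases lt_trichotomy z q with h' | h' | h'
            · exact hnc x p z q h1 h2 h' hπx hlink
            · exact hz2 h'
            · exact hout x z h1 h' hπx
          · exact hnc x y z w h1 h2 h3 hπx hπy
      have hE : eFun n μ = π' := by
        funext i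
        rw [heF, if_neg (show ¬ μ a = b by rw [hμa]; exact hqb), hμa, hμb]
        by_cases hi1 : i = a
        · rw [if_pos hi1, hi1, hab]
        by_cases hi2 : i = b
        · rw [if_neg hi1, if_pos hi2, hi2, hba]
        by_cases hi3 : i = q
        · rw [if_neg hi1, if_neg hi2, if_pos hi3, hi3, hqπ]
        by_cases hi4 : i = p
        · rw [if_neg hi1, if_neg hi2, if_neg hi3, if_pos hi4, hi4, hlink]
        · rw [if_neg hi1, if_neg hi2, if_neg hi3, if_neg hi4, hμo i hi4 hi3 hi1 hi2]
      refine ⟨⟨μ, ⟨hμinv, hμfix, hμnc⟩, hE⟩, ?_⟩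
      apply Subtype.ext
      show (μ b, π' (μ b)) = (p, q)
      rw [hμb, hlink]
end
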